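/- arXiv:0710.2614 — 7 statements merged into one kernel-verified Lean document; each statement's English description precedes it below -/
import Mathlib

section
/- Let a, b ∈ ℝ ∪ {−∞, +∞} with a < b, let n ≥ 2, and let f : (a,b)^2 → ℝ be such that (x₁,…,xₙ) ↦ f(min_i x_i, max_i x_i) is integrable on (a,b)^n. Then ∫_{(a,b)^n} f(min_i x_i, max_i x_i) dx = n(n−1) ∫_a^b ∫_a^v f(u,v) (v−u)^{n−2} du dv. -/
open MeasureTheory Set

section Aux

/-- A hyperplane `{x | x i = x j}` with `i ≠ j` is Lebesgue-null in `Fin n → ℝ`. -/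
lemma minmax_hyperplane_null {n : ℕ} {i j : Fin n} (hij : i ≠ j) :
    (volume : Measure (Fin n → ℝ)) {x | x i = x j} = 0 := by
  have h : {x : Fin n → ℝ | x i = x j} =
      ((LinearMap.ker ((LinearMap.proj i : (Fin n → ℝ) →ₗ[ℝ] ℝ) - LinearMap.proj j) :
        Submodule ℝ (Fin n → ℝ)) : Set (Fin n → ℝ)) := by
    ext x
    simp [LinearMap.mem_ker, sub_eq_zero]
  rw [h]
  refine Measure.addHaar_submodule _ _ fun htop => ?_
  have hx : Function.update (0 : Fin n → ℝ) i 1 ∈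
      LinearMap.ker ((LinearMap.proj i : (Fin n → ℝ) →ₗ[ℝ] ℝ) - LinearMap.proj j) := by
    rw [htop]; trivial
  simp [LinearMap.mem_ker, Function.update_of_ne hij.symm] at hx

/-- The region where the minimum is attained (strictly) at `i` and the maximum at `j`. -/
def minmaxT {n : ℕ} (i j : Fin n) : Set (Fin n → ℝ) :=
  {x | (∀ k, k ≠ i → x i < x k) ∧ (∀ k, k ≠ j → x k < x j)}

lemma measurableSet_minmaxT {n : ℕ} (i j : Fin n) : MeasurableSet (minmaxT i j) := by
  have h : minmaxT i j =
      (⋂ k, ⋂ _ : k ≠ i, {x : Fin n → ℝ | x i < x k}) ∩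
        ⋂ k, ⋂ _ : k ≠ j, {x : Fin n → ℝ | x k < x j} := by
    ext x; simp [minmaxT]
  rw [h]
  exact (MeasurableSet.iInter fun k => MeasurableSet.iInter fun _ =>
      measurableSet_lt (measurable_pi_apply i) (measurable_pi_apply k)).inter
    (MeasurableSet.iInter fun k => MeasurableSet.iInter fun _ =>
      measurableSet_lt (measurable_pi_apply k) (measurable_pi_apply j))

lemma minmax_exists_perm {α : Type*} [DecidableEq α] {i0 i1 i j : α}
    (h01 : i0 ≠ i1) (hij : i ≠ j) : ∃ σ : Equiv.Perm α, σ i = i0 ∧ σ j = i1 := by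
  refine ⟨(Equiv.swap i1 (Equiv.swap i0 i j)) * (Equiv.swap i0 i), ?_, ?_⟩
  · have h2 : i0 ≠ Equiv.swap i0 i j := by
      intro h
      exact hij (Equiv.injective (Equiv.swap i0 i)
        (by rw [← h, Equiv.swap_apply_right]))
    have h3 : Equiv.swap i0 i i = i0 := Equiv.swap_apply_right _ _
    simp only [Equiv.Perm.mul_apply, h3]
    exact Equiv.swap_apply_of_ne_of_ne h01 h2
  · simp only [Equiv.Perm.mul_apply]
    exact Equiv.swap_apply_right _ _

/-- Composition with a permutation of coordinates, as a measurable equiv. -/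
def compPermEquiv {n : ℕ} (σ : Equiv.Perm (Fin n)) : (Fin n → ℝ) ≃ᵐ (Fin n → ℝ) :=
  MeasurableEquiv.piCongrLeft (fun _ : Fin n => ℝ) σ.symm

lemma compPermEquiv_apply {n : ℕ} (σ : Equiv.Perm (Fin n)) (x : Fin n → ℝ) :
    compPermEquiv σ x = x ∘ σ := by
  funext k
  rw [compPermEquiv, MeasurableEquiv.coe_piCongrLeft]
  conv_lhs => rw [show k = σ.symm (σ k) from (σ.symm_apply_apply k).symm]
  rw [Equiv.piCongrLeft_apply_apply]
  rfl

lemma compPermEquiv_measurePreserving {n : ℕ} (σ : Equiv.Perm (Fin n)) :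
    MeasurePreserving (compPermEquiv σ) volume volume :=
  volume_measurePreserving_piCongrLeft _ _

lemma comp_mem_minmaxT_iff {n : ℕ} (σ : Equiv.Perm (Fin n)) (i j : Fin n) (x : Fin n → ℝ) :
    x ∘ σ ∈ minmaxT i j ↔ x ∈ minmaxT (σ i) (σ j) := by
  constructor
  · rintro ⟨h1, h2⟩
    refine ⟨fun k hk => ?_, fun k hk => ?_⟩
    · have hne : σ.symm k ≠ i := fun h => hk (by rw [← σ.apply_symm_apply k, h])
      have := h1 (σ.symm k) hne
      simpa [σ.apply_symm_apply] using this
    · have hne : σ.symm k ≠ j := fun h => hk (by rw [← σ.apply_symm_apply k, h])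
      have := h2 (σ.symm k) hne
      simpa [σ.apply_symm_apply] using this
  · rintro ⟨h1, h2⟩
    refine ⟨fun k hk => ?_, fun k hk => ?_⟩
    · exact h1 (σ k) fun h => hk (σ.injective h)
    · exact h2 (σ k) fun h => hk (σ.injective h)

lemma comp_mem_pi_iff {n : ℕ} (σ : Equiv.Perm (Fin n)) (I : Set ℝ) (x : Fin n → ℝ) :
    x ∘ σ ∈ Set.univ.pi (fun _ : Fin n => I) ↔ x ∈ Set.univ.pi (fun _ : Fin n => I) := by
  simp only [Set.mem_univ_pi, Function.comp_apply]
  constructor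
  · intro h k
    simpa [σ.apply_symm_apply] using h (σ.symm k)
  · intro h k
    exact h _

lemma inf'_comp_perm {n : ℕ} (σ : Equiv.Perm (Fin n)) (x : Fin n → ℝ)
    (H : (Finset.univ : Finset (Fin n)).Nonempty) :
    Finset.univ.inf' H (x ∘ σ) = Finset.univ.inf' H x := by
  refine le_antisymm (Finset.le_inf' _ _ fun k _ => ?_) (Finset.le_inf' _ _ fun k _ => ?_)
  · calc Finset.univ.inf' H (x ∘ σ) ≤ (x ∘ σ) (σ.symm k) :=
        Finset.inf'_le _ (Finset.mem_univ _)
      _ = x k := by simp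
  · calc Finset.univ.inf' H x ≤ x (σ k) := Finset.inf'_le _ (Finset.mem_univ _)
      _ = (x ∘ σ) k := rfl

lemma sup'_comp_perm {n : ℕ} (σ : Equiv.Perm (Fin n)) (x : Fin n → ℝ)
    (H : (Finset.univ : Finset (Fin n)).Nonempty) :
    Finset.univ.sup' H (x ∘ σ) = Finset.univ.sup' H x := by
  refine le_antisymm (Finset.sup'_le _ _ fun k _ => ?_) (Finset.sup'_le _ _ fun k _ => ?_)
  · calc (x ∘ σ) k = x (σ k) := rfl
      _ ≤ Finset.univ.sup' H x := Finset.le_sup' _ (Finset.mem_univ _)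
  · calc x k = (x ∘ σ) (σ.symm k) := by simp
      _ ≤ Finset.univ.sup' H (x ∘ σ) := Finset.le_sup' _ (Finset.mem_univ _)

end Aux

/-- Formula (2): for `a, b ∈ ℝ ∪ {−∞, +∞}` with `a < b`, `n ≥ 2`, and `f : ]a,b[² → ℝ`
such that `x ↦ f(min_i x_i, max_i x_i)` is integrable on `]a,b[^n`,
`∫_{]a,b[^n} f(min_i x_i, max_i x_i) dx = n(n−1) ∫_a^b ∫_a^v f(u,v) (v−u)^{n−2} du dv`. -/
theorem integral_of_min_max (a b : EReal) (hab : a < b) (n : ℕ) (hn : 2 ≤ n) (f : ℝ → ℝ → ℝ)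
    (hf : IntegrableOn
      (fun x : Fin n → ℝ =>
        f (Finset.univ.inf' ⟨⟨0, by omega⟩, Finset.mem_univ _⟩ x)
          (Finset.univ.sup' ⟨⟨0, by omega⟩, Finset.mem_univ _⟩ x))
      (Set.univ.pi fun _ : Fin n => {t : ℝ | a < (t : EReal) ∧ (t : EReal) < b})) :
    (∫ x in Set.univ.pi fun _ : Fin n => {t : ℝ | a < (t : EReal) ∧ (t : EReal) < b},
        f (Finset.univ.inf' ⟨⟨0, by omega⟩, Finset.mem_univ _⟩ x)
          (Finset.univ.sup' ⟨⟨0, by omega⟩, Finset.mem_univ _⟩ x))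
      = (n : ℝ) * ((n : ℝ) - 1) *
          ∫ v in {t : ℝ | a < (t : EReal) ∧ (t : EReal) < b},
            ∫ u in {t : ℝ | a < (t : EReal) ∧ t < v}, f u v * (v - u) ^ (n - 2) := by
  obtain ⟨m, rfl⟩ : ∃ m, n = m + 2 := ⟨n - 2, by omega⟩
  set I : Set ℝ := {t : ℝ | a < (t : EReal) ∧ (t : EReal) < b} with hIdef
  have hI : MeasurableSet I := by
    have h : I = Real.toEReal ⁻¹' (Set.Ioo a b) := rfl
    rw [h]
    exact continuous_coe_real_ereal.measurable measurableSet_Ioo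
  set S : Set (Fin (m + 2) → ℝ) := Set.univ.pi fun _ => I with hSdef
  have hS : MeasurableSet S := MeasurableSet.univ_pi fun _ => hI
  set g : (Fin (m + 2) → ℝ) → ℝ := fun x =>
    f (Finset.univ.inf' ⟨⟨0, by omega⟩, Finset.mem_univ _⟩ x)
      (Finset.univ.sup' ⟨⟨0, by omega⟩, Finset.mem_univ _⟩ x) with hgdef
  -- invariance of `g` under permutations of coordinates
  have hg_comp : ∀ (σ : Equiv.Perm (Fin (m + 2))) (x : Fin (m + 2) → ℝ), g (x ∘ σ) = g x := by
    intro σ x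
    simp only [hgdef]
    exact congrArg₂ f (inf'_comp_perm σ x _) (sup'_comp_perm σ x _)
  have hAmeas : ∀ p : Fin (m + 2) × Fin (m + 2), MeasurableSet (S ∩ minmaxT p.1 p.2) :=
    fun p => hS.inter (measurableSet_minmaxT _ _)
  -- Step 1 : decompose the integral over `S` into pieces
  have hcov : ∀ x : Fin (m + 2) → ℝ, Function.Injective x →
      ∃ p : Fin (m + 2) × Fin (m + 2), p.1 ≠ p.2 ∧ x ∈ minmaxT p.1 p.2 := by
    intro x hx
    obtain ⟨i, -, hi⟩ := Finset.exists_min_image Finset.univ x ⟨0, Finset.mem_univ 0⟩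
    obtain ⟨j, -, hj⟩ := Finset.exists_max_image Finset.univ x ⟨0, Finset.mem_univ 0⟩
    have hmin : ∀ k, k ≠ i → x i < x k := fun k hk =>
      lt_of_le_of_ne (hi k (Finset.mem_univ k)) fun h => hk (hx h).symm
    have hmax : ∀ k, k ≠ j → x k < x j := fun k hk =>
      lt_of_le_of_ne (hj k (Finset.mem_univ k)) fun h => hk (hx h)
    have hij : i ≠ j := by
      intro h
      subst h
      obtain ⟨k, hk⟩ := exists_ne i
      exact lt_asymm (hmin k hk) (hmax k hk)
    exact ⟨(i, j), hij, hmin, hmax⟩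
  have hSU : S =ᵐ[volume] ⋃ p ∈ Finset.univ.offDiag (α := Fin (m + 2)),
      S ∩ minmaxT p.1 p.2 := by
    rw [MeasureTheory.ae_eq_set]
    constructor
    · have hsub : S \ (⋃ p ∈ Finset.univ.offDiag (α := Fin (m + 2)), S ∩ minmaxT p.1 p.2)
          ⊆ ⋃ p ∈ Finset.univ.offDiag (α := Fin (m + 2)),
            {y : Fin (m + 2) → ℝ | y p.1 = y p.2} := by
        intro x hx
        obtain ⟨hxS, hxU⟩ := hx
        by_cases hinj : Function.Injective x
        · obtain ⟨p, hne, hp⟩ := hcov x hinj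
          exact absurd (Set.mem_iUnion₂.2 ⟨p, Finset.mem_offDiag.2
            ⟨Finset.mem_univ _, Finset.mem_univ _, hne⟩, Set.mem_inter hxS hp⟩) hxU
        · simp only [Function.Injective, not_forall] at hinj
          obtain ⟨i, j, hxe, hne⟩ := hinj
          exact Set.mem_iUnion₂.2 ⟨(i, j), Finset.mem_offDiag.2
            ⟨Finset.mem_univ _, Finset.mem_univ _, hne⟩, hxe⟩
      have hnull : volume (⋃ p ∈ Finset.univ.offDiag (α := Fin (m + 2)),
          {y : Fin (m + 2) → ℝ | y p.1 = y p.2}) = 0 := by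
        rw [← Finset.set_biUnion_coe, measure_biUnion_null_iff (Finset.countable_toSet _)]
        exact fun p hp => minmax_hyperplane_null (Finset.mem_offDiag.1 hp).2.2
      exact measure_mono_null hsub hnull
    · have h0 : (⋃ p ∈ Finset.univ.offDiag (α := Fin (m + 2)), S ∩ minmaxT p.1 p.2) \ S = ∅ := by
        rw [Set.diff_eq_empty]
        exact Set.iUnion₂_subset fun p _ => Set.inter_subset_left
      rw [h0, measure_empty]
  have hdisj : Set.Pairwise ↑(Finset.univ.offDiag (α := Fin (m + 2)))
      (Function.onFun Disjoint fun p : Fin (m + 2) × Fin (m + 2) => S ∩ minmaxT p.1 p.2) := by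
    intro p _ q _ hpq
    rw [Function.onFun, Set.disjoint_left]
    rintro x ⟨-, hxp⟩ ⟨-, hxq⟩
    by_cases h1 : p.1 = q.1
    · have h2 : p.2 ≠ q.2 := fun h2 => hpq (Prod.ext h1 h2)
      exact lt_asymm (hxp.2 q.2 (Ne.symm h2)) (hxq.2 p.2 h2)
    · exact lt_asymm (hxp.1 q.1 (Ne.symm h1)) (hxq.1 p.1 h1)
  have hsum : ∫ x in S, g x
      = ∑ p ∈ Finset.univ.offDiag (α := Fin (m + 2)), ∫ x in S ∩ minmaxT p.1 p.2, g x := by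
    rw [setIntegral_congr_set hSU]
    exact integral_biUnion_finset _ (fun p _ => hAmeas p) hdisj
      (fun p _ => hf.mono_set Set.inter_subset_left)
  -- Step 2 : each piece contributes the same amount, via a permutation of coordinates
  have h01 : (0 : Fin (m + 2)) ≠ 1 := by simp [Fin.ext_iff]
  have hterm : ∀ p ∈ Finset.univ.offDiag (α := Fin (m + 2)),
      ∫ x in S ∩ minmaxT p.1 p.2, g x = ∫ x in S ∩ minmaxT 0 1, g x := by
    intro p hp
    obtain ⟨σ, hσ1, hσ2⟩ := minmax_exists_perm h01 (Finset.mem_offDiag.1 hp).2.2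
    have hpre : (⇑(compPermEquiv σ)) ⁻¹' (S ∩ minmaxT p.1 p.2) = S ∩ minmaxT 0 1 := by
      ext x
      simp only [Set.mem_preimage, compPermEquiv_apply, Set.mem_inter_iff]
      rw [comp_mem_minmaxT_iff, hσ1, hσ2, comp_mem_pi_iff]
    calc ∫ x in S ∩ minmaxT p.1 p.2, g x
        = ∫ x in (⇑(compPermEquiv σ)) ⁻¹' (S ∩ minmaxT p.1 p.2), g (compPermEquiv σ x) :=
          ((compPermEquiv_measurePreserving σ).setIntegral_preimage_emb
            (MeasurableEquiv.measurableEmbedding _) g _).symm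
      _ = ∫ x in S ∩ minmaxT 0 1, g x := by
          rw [hpre]
          refine setIntegral_congr_fun (hAmeas (0, 1)) fun x _ => ?_
          rw [compPermEquiv_apply, hg_comp]
  have hcard : (Finset.univ.offDiag (α := Fin (m + 2))).card = (m + 2) * (m + 1) := by
    rw [Finset.offDiag_card, Finset.card_univ, Fintype.card_fin]
    rw [show (m + 2) * (m + 2) = (m + 2) * (m + 1) + (m + 2) by ring]
    omega
  have hsum2 : ∫ x in S, g x = ((m + 2) * (m + 1) : ℕ) • ∫ x in S ∩ minmaxT 0 1, g x := by
    rw [hsum, Finset.sum_congr rfl hterm, Finset.sum_const, hcard]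
  -- Step 3 : Fubini on the base piece
  set E1 : (Fin (m + 2) → ℝ) ≃ᵐ ℝ × (Fin (m + 1) → ℝ) :=
    MeasurableEquiv.piFinSuccAbove (fun _ : Fin (m + 2) => ℝ) 1 with hE1def
  set E2 : (Fin (m + 1) → ℝ) ≃ᵐ ℝ × (Fin m → ℝ) :=
    MeasurableEquiv.piFinSuccAbove (fun _ : Fin (m + 1) => ℝ) 0 with hE2def
  set F : (Fin (m + 2) → ℝ) ≃ᵐ ℝ × ℝ × (Fin m → ℝ) :=
    E1.trans ((MeasurableEquiv.refl ℝ).prodCongr E2) with hFdef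
  have h10 : (1 : Fin (m + 2)).succAbove 0 = 0 := by
    rw [Fin.succAbove_of_castSucc_lt]
    · rfl
    · simp [Fin.lt_def]
  have h1s : ∀ j : Fin m, (1 : Fin (m + 2)).succAbove j.succ = j.succ.succ := by
    intro j
    rw [Fin.succAbove_of_le_castSucc]
    simp [Fin.le_def]
  have hFx : ∀ x : Fin (m + 2) → ℝ, F x = (x 1, x 0, fun j : Fin m => x j.succ.succ) := by
    intro x
    have h : F x = (x 1, x ((1 : Fin (m + 2)).succAbove 0),
        fun j : Fin m => x ((1 : Fin (m + 2)).succAbove ((0 : Fin (m + 1)).succAbove j))) := rfl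
    have h3 : (fun j : Fin m => x ((1 : Fin (m + 2)).succAbove ((0 : Fin (m + 1)).succAbove j)))
        = fun j : Fin m => x j.succ.succ := by
      funext j
      rw [Fin.zero_succAbove, h1s j]
    rw [h, h10, h3]
  have hFmp : MeasurePreserving F volume volume := by
    have hcoe : ⇑F = (Prod.map (id : ℝ → ℝ) ⇑E2) ∘ ⇑E1 := rfl
    rw [hcoe]
    refine MeasurePreserving.comp ?_ (volume_preserving_piFinSuccAbove _ 1)
    have h2 : MeasurePreserving (Prod.map (id : ℝ → ℝ) ⇑E2)
        ((volume : Measure ℝ).prod (volume : Measure (Fin (m + 1) → ℝ)))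
        ((volume : Measure ℝ).prod (volume : Measure (ℝ × (Fin m → ℝ)))) :=
      (MeasurePreserving.id _).prod (volume_preserving_piFinSuccAbove _ 0)
    rw [Measure.volume_eq_prod ℝ (Fin (m + 1) → ℝ), Measure.volume_eq_prod ℝ (ℝ × (Fin m → ℝ))]
    exact h2
  set T' : Set (ℝ × ℝ × (Fin m → ℝ)) :=
    {p | p.1 ∈ I ∧ p.2.1 ∈ I ∧ p.2.1 < p.1 ∧ ∀ j, p.2.2 j ∈ Set.Ioo p.2.1 p.1} with hT'def
  have hss0 : ∀ j : Fin m, (j.succ.succ : Fin (m + 2)) ≠ 0 := fun j => Fin.succ_ne_zero _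
  have hss1 : ∀ j : Fin m, (j.succ.succ : Fin (m + 2)) ≠ 1 := by
    intro j h
    exact Fin.succ_ne_zero j (Fin.succ_injective _ (by rw [h, ← Fin.succ_zero_eq_one]))
  have hcase : ∀ k : Fin (m + 2), k = 0 ∨ k = 1 ∨ ∃ j : Fin m, k = j.succ.succ := by
    intro k
    rcases Fin.eq_zero_or_eq_succ k with rfl | ⟨i, rfl⟩
    · exact Or.inl rfl
    rcases Fin.eq_zero_or_eq_succ i with rfl | ⟨j, rfl⟩
    · exact Or.inr (Or.inl Fin.succ_zero_eq_one)
    · exact Or.inr (Or.inr ⟨j, rfl⟩)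
  have hA : S ∩ minmaxT 0 1 = ⇑F ⁻¹' T' := by
    ext x
    simp only [Set.mem_inter_iff, Set.mem_preimage, hFx x, hT'def, Set.mem_setOf_eq, hSdef,
      Set.mem_univ_pi, minmaxT, Set.mem_Ioo]
    constructor
    · rintro ⟨hxS, hmin, hmax⟩
      exact ⟨hxS 1, hxS 0, hmin 1 (Ne.symm h01),
        fun j => ⟨hmin _ (hss0 j), hmax _ (hss1 j)⟩⟩
    · rintro ⟨h1, h0, h01x, hmid⟩
      refine ⟨fun k => ?_, fun k hk => ?_, fun k hk => ?_⟩
      · rcases hcase k with rfl | rfl | ⟨j, rfl⟩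
        · exact h0
        · exact h1
        · exact ⟨lt_trans h0.1 (EReal.coe_lt_coe_iff.2 (hmid j).1),
            lt_trans (EReal.coe_lt_coe_iff.2 (hmid j).2) h1.2⟩
      · rcases hcase k with rfl | rfl | ⟨j, rfl⟩
        · exact absurd rfl hk
        · exact h01x
        · exact (hmid j).1
      · rcases hcase k with rfl | rfl | ⟨j, rfl⟩
        · exact h01x
        · exact absurd rfl hk
        · exact (hmid j).2
  have hgx : ∀ x ∈ S ∩ minmaxT 0 1, g x = f (x 0) (x 1) := by
    intro x hx
    simp only [hgdef]
    congr 1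
    · refine le_antisymm (Finset.inf'_le _ (Finset.mem_univ _))
        (Finset.le_inf' _ _ fun k _ => ?_)
      rcases eq_or_ne k 0 with rfl | hk
      · exact le_refl _
      · exact (hx.2.1 k hk).le
    · refine le_antisymm (Finset.sup'_le _ _ fun k _ => ?_)
        (Finset.le_sup' _ (Finset.mem_univ _))
      rcases eq_or_ne k 1 with rfl | hk
      · exact le_refl _
      · exact (hx.2.2 k hk).le
  have hind : ∀ p : ℝ × ℝ × (Fin m → ℝ),
      (S ∩ minmaxT 0 1).indicator g (F.symm p)
        = T'.indicator (fun q : ℝ × ℝ × (Fin m → ℝ) => f q.2.1 q.1) p := by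
    intro p
    by_cases hp : p ∈ T'
    · have hxA : F.symm p ∈ S ∩ minmaxT 0 1 := by
        rw [hA, Set.mem_preimage, MeasurableEquiv.apply_symm_apply]
        exact hp
      rw [Set.indicator_of_mem hxA, Set.indicator_of_mem hp, hgx _ hxA]
      have h := hFx (F.symm p)
      rw [MeasurableEquiv.apply_symm_apply] at h
      have h1 : p.1 = (F.symm p) 1 := congrArg Prod.fst h
      have h0 : p.2.1 = (F.symm p) 0 := congrArg (fun z : ℝ × ℝ × (Fin m → ℝ) => z.2.1) h
      rw [h1, h0]
    · have hxA : F.symm p ∉ S ∩ minmaxT 0 1 := by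
        rw [hA, Set.mem_preimage, MeasurableEquiv.apply_symm_apply]
        exact hp
      rw [Set.indicator_of_notMem hxA, Set.indicator_of_notMem hp]
  have hInd : Integrable (T'.indicator fun q : ℝ × ℝ × (Fin m → ℝ) => f q.2.1 q.1) volume := by
    have h2 : Integrable ((S ∩ minmaxT 0 1).indicator g) volume :=
      (integrable_indicator_iff (hAmeas (0, 1))).2 (hf.mono_set Set.inter_subset_left)
    have h3 := ((hFmp.symm F).integrable_comp_emb
      (MeasurableEquiv.measurableEmbedding F.symm)).2 h2
    have h4 : (S ∩ minmaxT 0 1).indicator g ∘ ⇑F.symm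
        = T'.indicator fun q : ℝ × ℝ × (Fin m → ℝ) => f q.2.1 q.1 := funext hind
    rwa [h4] at h3
  set Iv : ℝ → Set ℝ := fun v => {t : ℝ | a < (t : EReal) ∧ t < v} with hIvdef
  have hIvmeas : ∀ v : ℝ, MeasurableSet (Iv v) := by
    intro v
    have h : Iv v = (Real.toEReal ⁻¹' Set.Ioi a) ∩ Set.Iio v := rfl
    rw [h]
    exact (continuous_coe_real_ereal.measurable measurableSet_Ioi).inter measurableSet_Iio
  have hInd' : Integrable (T'.indicator fun q : ℝ × ℝ × (Fin m → ℝ) => f q.2.1 q.1)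
      ((volume : Measure ℝ).prod volume) := by
    rw [← Measure.volume_eq_prod]; exact hInd
  have key : (fun v : ℝ => ∫ q : ℝ × (Fin m → ℝ),
        T'.indicator (fun q : ℝ × ℝ × (Fin m → ℝ) => f q.2.1 q.1) (v, q))
      =ᵐ[volume] fun v : ℝ =>
        I.indicator (fun v => ∫ u in Iv v, f u v * (v - u) ^ m) v := by
    filter_upwards [hInd'.prod_right_ae] with v hv
    by_cases hvI : v ∈ I
    · rw [Set.indicator_of_mem hvI]
      have hslice : ∀ q : ℝ × (Fin m → ℝ),
          T'.indicator (fun q : ℝ × ℝ × (Fin m → ℝ) => f q.2.1 q.1) (v, q)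
            = ({q : ℝ × (Fin m → ℝ) | q.1 ∈ Iv v ∧ ∀ j, q.2 j ∈ Set.Ioo q.1 v}).indicator
                (fun q => f q.1 v) q := by
        intro q
        by_cases hq : q ∈ {q : ℝ × (Fin m → ℝ) | q.1 ∈ Iv v ∧ ∀ j, q.2 j ∈ Set.Ioo q.1 v}
        · have hmem : (v, q) ∈ T' :=
            ⟨hvI, ⟨hq.1.1, lt_trans (EReal.coe_lt_coe_iff.2 hq.1.2) hvI.2⟩, hq.1.2, hq.2⟩
          rw [Set.indicator_of_mem hmem, Set.indicator_of_mem hq]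
        · have hmem : (v, q) ∉ T' := fun h => hq ⟨⟨h.2.1.1, h.2.2.1⟩, h.2.2.2⟩
          rw [Set.indicator_of_notMem hmem, Set.indicator_of_notMem hq]
      have hv' : Integrable (({q : ℝ × (Fin m → ℝ) | q.1 ∈ Iv v ∧
          ∀ j, q.2 j ∈ Set.Ioo q.1 v}).indicator (fun q => f q.1 v))
          ((volume : Measure ℝ).prod volume) := by
        rw [← Measure.volume_eq_prod, ← funext hslice]
        exact hv
      calc ∫ q : ℝ × (Fin m → ℝ),
            T'.indicator (fun q : ℝ × ℝ × (Fin m → ℝ) => f q.2.1 q.1) (v, q)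
          = ∫ q : ℝ × (Fin m → ℝ), ({q : ℝ × (Fin m → ℝ) | q.1 ∈ Iv v ∧
              ∀ j, q.2 j ∈ Set.Ioo q.1 v}).indicator (fun q => f q.1 v) q := by
            simp_rw [hslice]
        _ = ∫ u : ℝ, ∫ w : Fin m → ℝ, ({q : ℝ × (Fin m → ℝ) | q.1 ∈ Iv v ∧
              ∀ j, q.2 j ∈ Set.Ioo q.1 v}).indicator (fun q => f q.1 v) (u, w) := by
            rw [show (volume : Measure (ℝ × (Fin m → ℝ)))
              = (volume : Measure ℝ).prod volume from Measure.volume_eq_prod _ _]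
            exact integral_prod _ hv'
        _ = ∫ u in Iv v, f u v * (v - u) ^ m := by
            have hin : ∀ u : ℝ, (∫ w : Fin m → ℝ, ({q : ℝ × (Fin m → ℝ) | q.1 ∈ Iv v ∧
                ∀ j, q.2 j ∈ Set.Ioo q.1 v}).indicator (fun q => f q.1 v) (u, w))
                = (Iv v).indicator (fun u => f u v * (v - u) ^ m) u := by
              intro u
              by_cases hu : u ∈ Iv v
              · have hw : ∀ w : Fin m → ℝ, ({q : ℝ × (Fin m → ℝ) | q.1 ∈ Iv v ∧
                    ∀ j, q.2 j ∈ Set.Ioo q.1 v}).indicator (fun q => f q.1 v) (u, w)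
                    = (Set.univ.pi fun _ : Fin m => Set.Ioo u v).indicator
                        (fun _ => f u v) w := by
                  intro w
                  by_cases hww : w ∈ Set.univ.pi fun _ : Fin m => Set.Ioo u v
                  · have hmem : (u, w) ∈ {q : ℝ × (Fin m → ℝ) | q.1 ∈ Iv v ∧
                        ∀ j, q.2 j ∈ Set.Ioo q.1 v} := ⟨hu, fun j => hww j (Set.mem_univ _)⟩
                    rw [Set.indicator_of_mem hmem, Set.indicator_of_mem hww]
                  · have hmem : (u, w) ∉ {q : ℝ × (Fin m → ℝ) | q.1 ∈ Iv v ∧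
                        ∀ j, q.2 j ∈ Set.Ioo q.1 v} :=
                      fun hmem => hww fun j _ => hmem.2 j
                    rw [Set.indicator_of_notMem hmem, Set.indicator_of_notMem hww]
                simp_rw [hw]
                rw [integral_indicator_const _
                  (MeasurableSet.univ_pi fun _ => measurableSet_Ioo),
                  Set.indicator_of_mem hu]
                rw [measureReal_def, volume_pi_pi, Real.volume_Ioo]
                simp only [Finset.prod_const, Finset.card_univ, Fintype.card_fin]
                rw [ENNReal.toReal_pow, ENNReal.toReal_ofReal (sub_nonneg.2 hu.2.le),
                  smul_eq_mul, mul_comm]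
              · have hw : ∀ w : Fin m → ℝ, ({q : ℝ × (Fin m → ℝ) | q.1 ∈ Iv v ∧
                    ∀ j, q.2 j ∈ Set.Ioo q.1 v}).indicator (fun q => f q.1 v) (u, w) = 0 :=
                  fun w => Set.indicator_of_notMem (fun hmem => hu hmem.1) _
                rw [Set.indicator_of_notMem hu]
                simp_rw [hw]
                exact integral_zero _ _
            simp_rw [hin]
            rw [integral_indicator (hIvmeas v)]
    · rw [Set.indicator_of_notMem hvI]
      have hz : ∀ q : ℝ × (Fin m → ℝ),
          T'.indicator (fun q : ℝ × ℝ × (Fin m → ℝ) => f q.2.1 q.1) (v, q) = 0 :=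
        fun q => Set.indicator_of_notMem (fun hmem => hvI hmem.1) _
      simp_rw [hz]
      exact integral_zero _ _
  have hJ : ∫ x in S ∩ minmaxT 0 1, g x
      = ∫ v in I, ∫ u in Iv v, f u v * (v - u) ^ m := by
    calc ∫ x in S ∩ minmaxT 0 1, g x
        = ∫ x, (S ∩ minmaxT 0 1).indicator g x := (integral_indicator (hAmeas (0, 1))).symm
      _ = ∫ p : ℝ × ℝ × (Fin m → ℝ), (S ∩ minmaxT 0 1).indicator g (F.symm p) :=
          ((hFmp.symm F).integral_comp (MeasurableEquiv.measurableEmbedding F.symm) _).symm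
      _ = ∫ p : ℝ × ℝ × (Fin m → ℝ),
            T'.indicator (fun q : ℝ × ℝ × (Fin m → ℝ) => f q.2.1 q.1) p := by
          simp_rw [hind]
      _ = ∫ v : ℝ, ∫ q : ℝ × (Fin m → ℝ),
            T'.indicator (fun q : ℝ × ℝ × (Fin m → ℝ) => f q.2.1 q.1) (v, q) := by
          rw [show (volume : Measure (ℝ × ℝ × (Fin m → ℝ)))
            = (volume : Measure ℝ).prod volume from Measure.volume_eq_prod _ _]
          exact integral_prod _ hInd'
      _ = ∫ v : ℝ, I.indicator (fun v => ∫ u in Iv v, f u v * (v - u) ^ m) v :=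
          integral_congr_ae key
      _ = ∫ v in I, ∫ u in Iv v, f u v * (v - u) ^ m := integral_indicator hI
  -- Final assembly
  rw [hsum2, hJ]
  simp only [Nat.add_sub_cancel]
  rw [nsmul_eq_mul]
  have hc : (((m + 2) * (m + 1) : ℕ) : ℝ) = ((m + 2 : ℕ) : ℝ) * (((m + 2 : ℕ) : ℝ) - 1) := by
    push_cast
    ring
  rw [hc]
end

section
/- Let a, b ∈ ℝ with a < b, let n ≥ 1, let S be a nonempty subset of {1,…,n}, and let f : (a,b) → ℝ be such that x ↦ f(min_{i ∈ S} x_i) is integrable on (a,b)^n. Then ∫_{(a,b)^n} f(min_{i ∈ S} x_i) dx = (b−a)^{n−|S|} · |S| · ∫_a^b f(u) (b−u)^{|S|−1} du. -/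
open MeasureTheory

/-- Formula (4): for real `a < b`, `n ≥ 1`, a nonempty `S ⊆ {1,…,n}`, and `f : ]a,b[ → ℝ`
such that `x ↦ f(min_{i ∈ S} x_i)` is integrable on `]a,b[^n`,
`∫_{]a,b[^n} f(min_{i∈S} x_i) dx = (b−a)^{n−|S|} |S| ∫_a^b f(u) (b−u)^{|S|−1} du`. -/
theorem integral_of_min_on_subset (a b : ℝ) (hab : a < b) (n : ℕ) (hn : 1 ≤ n)
    (S : Finset (Fin n)) (hS : S.Nonempty) (f : ℝ → ℝ)
    (hf : IntegrableOn (fun x : Fin n → ℝ => f (S.inf' hS x))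
      (Set.univ.pi fun _ : Fin n => Set.Ioo a b)) :
    (∫ x in Set.univ.pi fun _ : Fin n => Set.Ioo a b, f (S.inf' hS x))
      = (b - a) ^ (n - S.card) * (S.card : ℝ) *
          ∫ u in Set.Ioo a b, f u * (b - u) ^ (S.card - 1) := by
  classical
  obtain ⟨m, rfl⟩ : ∃ m, n = m + 1 := ⟨n - 1, (Nat.succ_pred_eq_of_pos hn).symm⟩
  set s := S.card with hs_def
  have hs1 : 1 ≤ s := Finset.card_pos.mpr hS
  have hsm : s ≤ m + 1 := by
    simpa using Finset.card_le_card (Finset.subset_univ S)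
  set box : Set (Fin (m + 1) → ℝ) := Set.univ.pi fun _ => Set.Ioo a b with hbox_def
  set B : Fin (m + 1) → Set (Fin (m + 1) → ℝ) := fun i =>
    box ∩ {x | ∀ j ∈ S, (j < i → x i < x j) ∧ (i < j → x i ≤ x j)} with hB_def
  have hboxmeas : MeasurableSet box := MeasurableSet.univ_pi fun _ => measurableSet_Ioo
  have hBmeas : ∀ i, MeasurableSet (B i) := by
    intro i
    refine hboxmeas.inter ?_
    have : {x : Fin (m + 1) → ℝ | ∀ j ∈ S, (j < i → x i < x j) ∧ (i < j → x i ≤ x j)}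
        = ⋂ j ∈ S, ({x : Fin (m + 1) → ℝ | j < i → x i < x j} ∩
            {x : Fin (m + 1) → ℝ | i < j → x i ≤ x j}) := by
      ext x; simp [forall_and]
    rw [this]
    refine MeasurableSet.biInter S.countable_toSet fun j _ => MeasurableSet.inter ?_ ?_
    · by_cases h : j < i
      · simpa [h] using measurableSet_lt (measurable_pi_apply i) (measurable_pi_apply j)
      · simp [h]
    · by_cases h : i < j
      · simpa [h] using measurableSet_le (measurable_pi_apply i) (measurable_pi_apply j)
      · simp [h]
  -- points of `B i` have their min at coordinate `i`
  have hinf : ∀ i ∈ S, ∀ x ∈ B i, S.inf' hS x = x i := by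
    intro i hi x hx
    refine le_antisymm (Finset.inf'_le _ hi) (Finset.le_inf' _ _ fun j hj => ?_)
    rcases lt_trichotomy j i with h | h | h
    · exact le_of_lt ((hx.2 j hj).1 h)
    · subst h; exact le_rfl
    · exact (hx.2 j hj).2 h
  -- the `B i`, `i ∈ S`, cover the box
  have hcover : box = ⋃ i ∈ S, B i := by
    apply Set.Subset.antisymm
    · intro x hx
      obtain ⟨i₀, hi₀S, hi₀v⟩ := S.exists_mem_eq_inf' hS x
      set T := S.filter fun j => x j = S.inf' hS x with hT_def
      have hTne : T.Nonempty := ⟨i₀, Finset.mem_filter.mpr ⟨hi₀S, hi₀v.symm⟩⟩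
      set i := T.min' hTne with hi_def
      have hiT : i ∈ T := T.min'_mem hTne
      have hiS : i ∈ S := (Finset.mem_filter.mp hiT).1
      have hxi : x i = S.inf' hS x := (Finset.mem_filter.mp hiT).2
      refine Set.mem_biUnion hiS ⟨hx, fun j hj => ?_⟩
      have hle : x i ≤ x j := by rw [hxi]; exact Finset.inf'_le _ hj
      constructor
      · intro hji
        rcases lt_or_eq_of_le hle with h | h
        · exact h
        · exfalso
          have hjT : j ∈ T := Finset.mem_filter.mpr ⟨hj, by rw [← h, hxi]⟩
          exact absurd (T.min'_le j hjT) (not_le.mpr hji)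
      · intro _; exact hle
    · exact Set.iUnion₂_subset fun i _ => Set.inter_subset_left
  -- the `B i` are pairwise disjoint
  have hdisj : (S : Set (Fin (m + 1))).Pairwise (Function.onFun Disjoint B) := by
    intro i hi j hj hij
    have hi' : i ∈ S := hi
    have hj' : j ∈ S := hj
    rw [Function.onFun, Set.disjoint_left]
    intro x hxi hxj
    rcases hij.lt_or_gt with h | h
    · exact absurd ((hxi.2 j hj').2 h) (not_le.mpr ((hxj.2 i hi').1 h))
    · exact absurd ((hxj.2 i hi').2 h) (not_le.mpr ((hxi.2 j hj').1 h))
  -- key computation on each `B i`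
  have key : ∀ i ∈ S, (∫ x in B i, f (x i))
      = (∫ u in Set.Ioo a b, f u * (b - u) ^ (s - 1)) * (b - a) ^ (m + 1 - s) := by
    intro i hi
    have hint : IntegrableOn (fun x : Fin (m + 1) → ℝ => f (x i)) (B i) := by
      refine (hf.mono_set Set.inter_subset_left).congr_fun ?_ (hBmeas i)
      intro x hx; exact congrArg f (hinf i hi x hx)
    set e := MeasurableEquiv.piFinSuccAbove (fun _ : Fin (m + 1) => ℝ) i with he_def
    have hmp : MeasurePreserving e.symm :=
      (volume_preserving_piFinSuccAbove (fun _ : Fin (m + 1) => ℝ) i).symm e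
    have hes : ∀ (u : ℝ) (y : Fin m → ℝ), e.symm (u, y) = i.insertNth u y := by
      intro u y
      simp [he_def, MeasurableEquiv.piFinSuccAbove_symm_apply, Fin.insertNthEquiv]
    -- the filter cardinality
    have hcard : (Finset.univ.filter fun k : Fin m => i.succAbove k ∈ S).card = s - 1 := by
      have himg : (Finset.univ.filter fun k : Fin m => i.succAbove k ∈ S).image i.succAbove
          = S.erase i := by
        ext j
        simp only [Finset.mem_image, Finset.mem_filter, Finset.mem_erase, Finset.mem_univ,
          true_and]
        constructor
        · rintro ⟨k, hk, rfl⟩; exact ⟨Fin.succAbove_ne i k, hk⟩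
        · rintro ⟨hne, hj⟩
          obtain ⟨k, rfl⟩ := Fin.exists_succAbove_eq hne
          exact ⟨k, hj, rfl⟩
      rw [← Finset.card_image_of_injective _ (Fin.succAbove_right_injective), himg,
        Finset.card_erase_of_mem hi]
    -- description of the slices
    have hslice : ∀ u ∈ Set.Ioo a b, ∀ y : Fin m → ℝ,
        (i.insertNth u y ∈ B i ↔ ∀ k, y k ∈
          (if i.succAbove k ∈ S then
            (if i.succAbove k < i then Set.Ioo u b else Set.Ico u b) else Set.Ioo a b)) := by
      intro u hu y
      constructor
      · rintro ⟨hbox', hcond⟩ k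
        have hyk : y k ∈ Set.Ioo a b := by
          have := hbox' (i.succAbove k) (Set.mem_univ _)
          simpa [Fin.insertNth_apply_succAbove] using this
        by_cases hkS : i.succAbove k ∈ S
        · have hc := hcond _ hkS
          rcases (Fin.succAbove_ne i k).lt_or_gt with hlt | hlt
          · have h1 : u < y k := by
              have := hc.1 hlt
              simpa [Fin.insertNth_apply_same, Fin.insertNth_apply_succAbove] using this
            simp [hkS, hlt, Set.mem_Ioo, h1, hyk.2]
          · have h1 : u ≤ y k := by
              have := hc.2 hlt
              simpa [Fin.insertNth_apply_same, Fin.insertNth_apply_succAbove] using this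
            simp [hkS, not_lt.mpr (le_of_lt hlt), Set.mem_Ico, h1, hyk.2]
        · simpa [hkS] using hyk
      · intro hy
        have hyIoo : ∀ k, y k ∈ Set.Ioo a b := by
          intro k
          have := hy k
          by_cases hkS : i.succAbove k ∈ S
          · by_cases hlt : i.succAbove k < i
            · rw [if_pos hkS, if_pos hlt] at this
              exact ⟨lt_trans hu.1 this.1, this.2⟩
            · rw [if_pos hkS, if_neg hlt] at this
              exact ⟨lt_of_lt_of_le hu.1 this.1, this.2⟩
          · rwa [if_neg hkS] at this
        constructor
        · intro j _
          by_cases hji : j = i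
          · subst hji; simpa [Fin.insertNth_apply_same] using hu
          · obtain ⟨k, rfl⟩ := Fin.exists_succAbove_eq hji
            simpa [Fin.insertNth_apply_succAbove] using hyIoo k
        · intro j hj
          by_cases hji : j = i
          · subst hji
            exact ⟨fun h => absurd h (lt_irrefl _), fun h => absurd h (lt_irrefl _)⟩
          obtain ⟨k, rfl⟩ := Fin.exists_succAbove_eq hji
          · have := hy k
            rw [if_pos hj] at this
            constructor
            · intro hlt
              rw [if_pos hlt] at this
              simpa [Fin.insertNth_apply_same, Fin.insertNth_apply_succAbove] using this.1
            · intro hlt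
              rw [if_neg (not_lt.mpr (le_of_lt hlt))] at this
              simpa [Fin.insertNth_apply_same, Fin.insertNth_apply_succAbove] using this.1
    -- inner integral computation
    have inner : ∀ u : ℝ,
        (∫ y : Fin m → ℝ, (B i).indicator (fun x => f (x i)) (e.symm (u, y)))
          = (Set.Ioo a b).indicator
              (fun u => f u * ((b - u) ^ (s - 1) * (b - a) ^ (m + 1 - s))) u := by
      intro u
      have hsec : MeasurableSet {y : Fin m → ℝ | e.symm (u, y) ∈ B i} :=
        (e.symm.measurable.comp measurable_prodMk_left) (hBmeas i)
      have hpt : ∀ y : Fin m → ℝ, (B i).indicator (fun x => f (x i)) (e.symm (u, y))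
          = Set.indicator {y : Fin m → ℝ | e.symm (u, y) ∈ B i} (fun _ => f u) y := by
        intro y
        by_cases h : e.symm (u, y) ∈ B i <;>
          simp [Set.indicator, h, hes, Fin.insertNth_apply_same]
      simp_rw [hpt]
      rw [integral_indicator_const (f u) hsec]
      by_cases hu : u ∈ Set.Ioo a b
      · have hset : {y : Fin m → ℝ | e.symm (u, y) ∈ B i}
            = Set.univ.pi (fun k => if i.succAbove k ∈ S then
                (if i.succAbove k < i then Set.Ioo u b else Set.Ico u b) else Set.Ioo a b) := by
          ext y
          rw [Set.mem_setOf_eq, hes u y]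
          simpa [Set.mem_univ_pi] using hslice u hu y
        have hvol : volume {y : Fin m → ℝ | e.symm (u, y) ∈ B i}
            = ENNReal.ofReal (b - u) ^ (s - 1) * ENNReal.ofReal (b - a) ^ (m + 1 - s) := by
          rw [hset, volume_pi_pi]
          have hfac : ∀ k : Fin m, volume (if i.succAbove k ∈ S then
              (if i.succAbove k < i then Set.Ioo u b else Set.Ico u b) else Set.Ioo a b)
              = if i.succAbove k ∈ S then ENNReal.ofReal (b - u) else ENNReal.ofReal (b - a) := by
            intro k
            by_cases hkS : i.succAbove k ∈ S
            · by_cases hlt : i.succAbove k < i <;> simp [hkS, hlt]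
            · simp [hkS]
          simp_rw [hfac]
          rw [Finset.prod_ite, Finset.prod_const, Finset.prod_const, hcard]
          congr 1
          have : (Finset.univ.filter fun k : Fin m => ¬ i.succAbove k ∈ S).card
              = m - (s - 1) := by
            have h2 := Finset.card_filter_add_card_filter_not
              (s := (Finset.univ : Finset (Fin m)))
              (p := fun k : Fin m => i.succAbove k ∈ S)
            rw [hcard] at h2
            simp only [Finset.card_univ, Fintype.card_fin] at h2
            omega
          rw [this]
          congr 1
          omega
        rw [measureReal_def, hvol, Set.indicator_of_mem hu]
        rw [smul_eq_mul, mul_comm]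
        congr 1
        rw [ENNReal.toReal_mul, ENNReal.toReal_pow, ENNReal.toReal_pow,
          ENNReal.toReal_ofReal (by linarith [hu.2] : (0:ℝ) ≤ b - u),
          ENNReal.toReal_ofReal (by linarith : (0:ℝ) ≤ b - a)]
      · have hempty : {y : Fin m → ℝ | e.symm (u, y) ∈ B i} = ∅ := by
          ext y
          simp only [Set.mem_setOf_eq, Set.mem_empty_iff_false, iff_false]
          intro h
          have h2 := h.1 i (Set.mem_univ _)
          rw [hes u y, Fin.insertNth_apply_same] at h2
          exact hu h2
        rw [hempty, Set.indicator_of_notMem hu]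
        simp
    -- Fubini
    calc (∫ x in B i, f (x i))
        = ∫ x, (B i).indicator (fun x => f (x i)) x := (integral_indicator (hBmeas i)).symm
      _ = ∫ p : ℝ × (Fin m → ℝ), (B i).indicator (fun x => f (x i)) (e.symm p) :=
          (hmp.integral_comp e.symm.measurableEmbedding _).symm
      _ = ∫ u : ℝ, ∫ y : Fin m → ℝ, (B i).indicator (fun x => f (x i)) (e.symm (u, y)) := by
          rw [Measure.volume_eq_prod, MeasureTheory.integral_prod]
          rw [← Measure.volume_eq_prod]
          exact (hmp.integrable_comp_emb e.symm.measurableEmbedding).mpr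
            ((integrable_indicator_iff (hBmeas i)).mpr hint)
      _ = ∫ u : ℝ, (Set.Ioo a b).indicator
            (fun u => f u * ((b - u) ^ (s - 1) * (b - a) ^ (m + 1 - s))) u := by
          congr 1
          funext u
          exact inner u
      _ = ∫ u in Set.Ioo a b, f u * ((b - u) ^ (s - 1) * (b - a) ^ (m + 1 - s)) :=
          integral_indicator measurableSet_Ioo
      _ = (∫ u in Set.Ioo a b, f u * (b - u) ^ (s - 1)) * (b - a) ^ (m + 1 - s) := by
          simp_rw [← mul_assoc]
          exact integral_mul_const _ _
  -- assemble
  have hsum : (∫ x in box, f (S.inf' hS x))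
      = ∑ i ∈ S, ∫ x in B i, f (S.inf' hS x) := by
    rw [hcover]
    exact integral_biUnion_finset S (fun i _ => hBmeas i) hdisj
      (fun i _ => hf.mono_set Set.inter_subset_left)
  rw [hsum]
  have hsum2 : ∀ i ∈ S, (∫ x in B i, f (S.inf' hS x))
      = (∫ u in Set.Ioo a b, f u * (b - u) ^ (s - 1)) * (b - a) ^ (m + 1 - s) := by
    intro i hiS
    rw [setIntegral_congr_fun (hBmeas i) (fun x hx => congrArg f (hinf i hiS x hx))]
    exact key i hiS
  rw [Finset.sum_congr rfl hsum2, Finset.sum_const, nsmul_eq_mul]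
  show (s : ℝ) * _ = (b - a) ^ (m + 1 - s) * (s : ℝ) * _
  ring
end

section
/- The orness average value over [0,1]² of the geometric mean G(x₁,x₂) = (x₁x₂)^{1/2} equals ln 4 − 1, i.e., ∫_{(0,1)²} (√(x₁x₂) − min(x₁,x₂))/(max(x₁,x₂) − min(x₁,x₂)) dx₁ dx₂ = ln 4 − 1. -/
open MeasureTheory Real Set intervalIntegral


-- diagonal is null
lemma diag_null : (volume : Measure (ℝ × ℝ)) {p : ℝ × ℝ | p.1 = p.2} = 0 := by
  have hm : MeasurableSet {p : ℝ × ℝ | p.1 = p.2} :=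
    isClosed_eq continuous_fst continuous_snd |>.measurableSet
  rw [Measure.volume_eq_prod, Measure.prod_apply hm]
  have : ∀ x : ℝ, (volume : Measure ℝ) (Prod.mk x ⁻¹' {p : ℝ × ℝ | p.1 = p.2}) = 0 := by
    intro x
    have : (Prod.mk x ⁻¹' {p : ℝ × ℝ | p.1 = p.2}) = {x} := by
      ext y; simp [eq_comm]
    rw [this]; exact volume_singleton
  simp [this]

lemma piece1 {x : ℝ} (hx : 0 < x) :
    ∫ y in (0:ℝ)..x, Real.sqrt y / (Real.sqrt x + Real.sqrt y)
      = -x + 2 * x * Real.log 2 := by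
  set a := Real.sqrt x with ha
  have ha0 : 0 < a := Real.sqrt_pos.mpr hx
  have haa : a * a = x := Real.mul_self_sqrt hx.le
  set F : ℝ → ℝ := fun y => y - 2 * a * Real.sqrt y + 2 * x * Real.log (a + Real.sqrt y) with hF
  have hcont : Continuous F := by
    have h1 : Continuous fun y : ℝ => Real.log (a + Real.sqrt y) := by
      rw [continuous_iff_continuousAt]
      intro y
      exact (Real.continuousAt_log (by positivity)).comp (by fun_prop)
    fun_prop
  have hderiv : ∀ y ∈ Set.Ioo (0:ℝ) x, HasDerivAt F (Real.sqrt y / (a + Real.sqrt y)) y := by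
    intro y hy
    have hy0 : 0 < y := hy.1
    have hs0 : 0 < Real.sqrt y := Real.sqrt_pos.mpr hy0
    have hsd : HasDerivAt Real.sqrt (1 / (2 * Real.sqrt y)) y := Real.hasDerivAt_sqrt hy0.ne'
    have hlog : HasDerivAt (fun y => Real.log (a + Real.sqrt y))
        ((1 / (2 * Real.sqrt y)) / (a + Real.sqrt y)) y := by
      have h1 : HasDerivAt (fun y => a + Real.sqrt y) (1 / (2 * Real.sqrt y)) y := by
        exact ((hasDerivAt_const y a).add hsd).congr_deriv (by simp)
      have := (Real.hasDerivAt_log (by positivity : a + Real.sqrt y ≠ 0)).comp y h1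
      exact this.congr_deriv (by ring)
    have hd := ((hasDerivAt_id y).sub ((hsd.const_mul (2*a)))).add (hlog.const_mul (2*x))
    refine hd.congr_deriv ?_
    rw [← haa]
    field_simp
    ring
  have hint : IntervalIntegrable (fun y => Real.sqrt y / (a + Real.sqrt y)) volume 0 x := by
    apply Continuous.intervalIntegrable
    apply Continuous.div (by fun_prop) (by fun_prop)
    intro y; positivity
  rw [integral_eq_sub_of_hasDerivAt_of_le hx.le hcont.continuousOn hderiv hint]
  simp only [hF, Real.sqrt_zero, add_zero, mul_zero, sub_zero, zero_sub]
  have h2a : Real.log (a + a) = Real.log 2 + Real.log a := by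
    rw [show a + a = 2 * a by ring, Real.log_mul (by norm_num) ha0.ne']
  rw [h2a]
  ring_nf
  nlinarith [haa]

lemma piece2 {x : ℝ} (hx : 0 < x) (hx1 : x ≤ 1) :
    ∫ y in x..(1:ℝ), Real.sqrt x / (Real.sqrt x + Real.sqrt y)
      = 2 * Real.sqrt x - 2 * x * Real.log (1 + Real.sqrt x)
        - 2 * x + 2 * x * Real.log 2 + x * Real.log x := by
  set a := Real.sqrt x with ha
  have ha0 : 0 < a := Real.sqrt_pos.mpr hx
  have haa : a * a = x := Real.mul_self_sqrt hx.le
  set F : ℝ → ℝ := fun y => 2 * a * Real.sqrt y - 2 * x * Real.log (a + Real.sqrt y) with hF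
  have hcont : Continuous F := by
    have h1 : Continuous fun y : ℝ => Real.log (a + Real.sqrt y) := by
      rw [continuous_iff_continuousAt]
      intro y
      exact (Real.continuousAt_log (by positivity)).comp (by fun_prop)
    fun_prop
  have hderiv : ∀ y ∈ Set.Ioo x (1:ℝ), HasDerivAt F (a / (a + Real.sqrt y)) y := by
    intro y hy
    have hy0 : 0 < y := lt_trans hx hy.1
    have hs0 : 0 < Real.sqrt y := Real.sqrt_pos.mpr hy0
    have hsd : HasDerivAt Real.sqrt (1 / (2 * Real.sqrt y)) y := Real.hasDerivAt_sqrt hy0.ne'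
    have hlog : HasDerivAt (fun y => Real.log (a + Real.sqrt y))
        ((1 / (2 * Real.sqrt y)) / (a + Real.sqrt y)) y := by
      have h1 : HasDerivAt (fun y => a + Real.sqrt y) (1 / (2 * Real.sqrt y)) y := by
        exact ((hasDerivAt_const y a).add hsd).congr_deriv (by simp)
      have := (Real.hasDerivAt_log (by positivity : a + Real.sqrt y ≠ 0)).comp y h1
      exact this.congr_deriv (by ring)
    have hd := (hsd.const_mul (2*a)).sub (hlog.const_mul (2*x))
    refine hd.congr_deriv ?_
    rw [← haa]
    field_simp
    ring
  have hint : IntervalIntegrable (fun y => a / (a + Real.sqrt y)) volume x 1 := by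
    apply Continuous.intervalIntegrable
    apply Continuous.div (by fun_prop) (by fun_prop)
    intro y; positivity
  rw [integral_eq_sub_of_hasDerivAt_of_le hx1 hcont.continuousOn hderiv hint]
  simp only [hF, Real.sqrt_one, mul_one, ← ha]
  have h2a : Real.log (a + a) = Real.log 2 + Real.log a := by
    rw [show a + a = 2 * a by ring, Real.log_mul (by norm_num) ha0.ne']
  have hla : Real.log a = Real.log x / 2 := by rw [ha, Real.log_sqrt hx.le]
  rw [h2a, hla, add_comm a 1]
  ring_nf
  nlinarith [haa]

lemma inner_int {x : ℝ} (hx : x ∈ Set.Ioo (0:ℝ) 1) :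
    ∫ y in Set.Ioo (0:ℝ) 1, Real.sqrt (min x y) / (Real.sqrt x + Real.sqrt y)
      = -3*x + 4*x*Real.log 2 + 2*Real.sqrt x + x*Real.log x - 2*x*Real.log (1 + Real.sqrt x) := by
  obtain ⟨hx0, hx1⟩ := hx
  have hcont : Continuous fun y : ℝ => Real.sqrt (min x y) / (Real.sqrt x + Real.sqrt y) := by
    apply Continuous.div (by fun_prop) (by fun_prop)
    intro y
    have : 0 < Real.sqrt x := Real.sqrt_pos.mpr hx0
    positivity
  have h1 : ∫ y in Set.Ioo (0:ℝ) 1, Real.sqrt (min x y) / (Real.sqrt x + Real.sqrt y)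
      = ∫ y in (0:ℝ)..1, Real.sqrt (min x y) / (Real.sqrt x + Real.sqrt y) := by
    rw [intervalIntegral.integral_of_le (by norm_num), integral_Ioc_eq_integral_Ioo]
  rw [h1, ← intervalIntegral.integral_add_adjacent_intervals
    (b := x) (hcont.intervalIntegrable _ _) (hcont.intervalIntegrable _ _)]
  have e1 : ∫ y in (0:ℝ)..x, Real.sqrt (min x y) / (Real.sqrt x + Real.sqrt y)
      = ∫ y in (0:ℝ)..x, Real.sqrt y / (Real.sqrt x + Real.sqrt y) := by
    apply intervalIntegral.integral_congr
    intro y hy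
    rw [Set.uIcc_of_le hx0.le] at hy
    simp only [min_eq_right hy.2]
  have e2 : ∫ y in x..(1:ℝ), Real.sqrt (min x y) / (Real.sqrt x + Real.sqrt y)
      = ∫ y in x..(1:ℝ), Real.sqrt x / (Real.sqrt x + Real.sqrt y) := by
    apply intervalIntegral.integral_congr
    intro y hy
    rw [Set.uIcc_of_le hx1.le] at hy
    simp only [min_eq_left hy.1]
  rw [e1, e2, piece1 hx0, piece2 hx0 hx1.le]
  ring

lemma outer_int :
    ∫ x in (0:ℝ)..1,
        (-3*x + 4*x*Real.log 2 + 2*Real.sqrt x + x*Real.log x - 2*x*Real.log (1 + Real.sqrt x))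
      = 2 * Real.log 2 - 1 := by
  set G : ℝ → ℝ := fun x => -3*x^2/2 + 2*Real.log 2*x^2 + x*Real.sqrt x
      + x*(x*Real.log x)/2 - x^2*Real.log (1 + Real.sqrt x) + x/2 - Real.sqrt x
      + Real.log (1 + Real.sqrt x) with hG
  have hlogc : Continuous fun x : ℝ => Real.log (1 + Real.sqrt x) :=
    (continuous_const.add Real.continuous_sqrt).log (fun x => (by positivity : (0:ℝ) < 1 + Real.sqrt x).ne')
  have hml : Continuous fun x : ℝ => x * Real.log x := Real.continuous_mul_log
  have hcont : Continuous G := by fun_prop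
  have hgcont : Continuous fun x : ℝ =>
      -3*x + 4*x*Real.log 2 + 2*Real.sqrt x + x*Real.log x - 2*x*Real.log (1 + Real.sqrt x) := by
    fun_prop
  have hderiv : ∀ x ∈ Set.Ioo (0:ℝ) 1, HasDerivAt G
      (-3*x + 4*x*Real.log 2 + 2*Real.sqrt x + x*Real.log x - 2*x*Real.log (1 + Real.sqrt x)) x := by
    intro x hx
    have hx0 : 0 < x := hx.1
    have hs0 : 0 < Real.sqrt x := Real.sqrt_pos.mpr hx0
    have haa : Real.sqrt x * Real.sqrt x = x := Real.mul_self_sqrt hx0.le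
    have hsd : HasDerivAt Real.sqrt (1 / (2 * Real.sqrt x)) x := Real.hasDerivAt_sqrt hx0.ne'
    have h1s : (0:ℝ) < 1 + Real.sqrt x := by positivity
    have hlog : HasDerivAt (fun x => Real.log (1 + Real.sqrt x))
        ((1 / (2 * Real.sqrt x)) / (1 + Real.sqrt x)) x := by
      have h1 : HasDerivAt (fun x => 1 + Real.sqrt x) (1 / (2 * Real.sqrt x)) x := by
        exact ((hasDerivAt_const x (1:ℝ)).add hsd).congr_deriv (by simp)
      have := (Real.hasDerivAt_log h1s.ne').comp x h1
      exact this.congr_deriv (by ring)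
    have hml' : HasDerivAt (fun x : ℝ => x * Real.log x) (Real.log x + 1) x :=
      Real.hasDerivAt_mul_log hx0.ne'
    have ht1 : HasDerivAt (fun x : ℝ => -3*x^2/2) (-3*x) x := by
      have := ((hasDerivAt_pow 2 x).const_mul (-3:ℝ)).div_const 2
      exact this.congr_deriv (by ring)
    have ht2 : HasDerivAt (fun x : ℝ => 2*Real.log 2*x^2) (4*Real.log 2*x) x := by
      have := (hasDerivAt_pow 2 x).const_mul (2*Real.log 2)
      exact this.congr_deriv (by ring)
    have ht3 : HasDerivAt (fun x : ℝ => x*Real.sqrt x)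
        (Real.sqrt x + x * (1 / (2 * Real.sqrt x))) x := by
      have := (hasDerivAt_id x).mul hsd
      exact this.congr_deriv (by simp only [id_eq]; ring)
    have ht4 : HasDerivAt (fun x : ℝ => x*(x*Real.log x)/2)
        ((x*Real.log x + x*(Real.log x + 1))/2) x := by
      have := ((hasDerivAt_id x).mul hml').div_const 2
      exact this.congr_deriv (by simp only [id_eq]; ring)
    have ht5 : HasDerivAt (fun x : ℝ => x^2*Real.log (1 + Real.sqrt x))
        (2*x*Real.log (1 + Real.sqrt x) + x^2*((1 / (2 * Real.sqrt x)) / (1 + Real.sqrt x))) x := by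
      have := (hasDerivAt_pow 2 x).mul hlog
      exact this.congr_deriv (by ring)
    have ht6 : HasDerivAt (fun x : ℝ => x/2) (1/2 : ℝ) x := by
      simpa using (hasDerivAt_id x).div_const 2
    have hd := ((((((ht1.add ht2).add ht3).add ht4).sub ht5).add ht6).sub hsd).add hlog
    refine hd.congr_deriv ?_
    set s := Real.sqrt x with hs
    rw [← haa]
    field_simp
    ring
  have hint : IntervalIntegrable (fun x : ℝ =>
      -3*x + 4*x*Real.log 2 + 2*Real.sqrt x + x*Real.log x - 2*x*Real.log (1 + Real.sqrt x))
      volume 0 1 := hgcont.intervalIntegrable _ _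
  rw [integral_eq_sub_of_hasDerivAt_of_le (by norm_num) hcont.continuousOn hderiv hint]
  simp only [hG, Real.sqrt_zero, Real.sqrt_one, Real.log_zero, add_zero, Real.log_one]
  ring

/-- The orness average value over `[0,1]²` of the geometric mean `G(x₁,x₂) = √(x₁x₂)`
equals `ln 4 − 1`. -/
theorem orness_average_geometric_mean_two :
    (∫ p in (Set.Ioo (0 : ℝ) 1) ×ˢ (Set.Ioo (0 : ℝ) 1),
        (Real.sqrt (p.1 * p.2) - min p.1 p.2) / (max p.1 p.2 - min p.1 p.2))
      = Real.log 4 - 1 := by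
  set s : Set (ℝ × ℝ) := (Set.Ioo (0 : ℝ) 1) ×ˢ (Set.Ioo (0 : ℝ) 1) with hs_def
  have hs : MeasurableSet s := (measurableSet_Ioo).prod measurableSet_Ioo
  set h : ℝ × ℝ → ℝ := fun p => Real.sqrt (min p.1 p.2) / (Real.sqrt p.1 + Real.sqrt p.2)
    with hh_def
  -- step 1 : a.e. equality
  have hne : ∀ᵐ p : ℝ × ℝ, p.1 ≠ p.2 := by
    rw [ae_iff]
    convert diag_null using 2
    ext p; simp
  have step1 : (∫ p in s,
      (Real.sqrt (p.1 * p.2) - min p.1 p.2) / (max p.1 p.2 - min p.1 p.2)) = ∫ p in s, h p := by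
    apply setIntegral_congr_ae hs
    filter_upwards [hne] with p hp hps
    obtain ⟨⟨hx0, hx1⟩, ⟨hy0, hy1⟩⟩ := hps
    rcases lt_or_gt_of_ne hp with hlt | hlt
    · -- p.1 < p.2
      have ha : Real.sqrt p.1 * Real.sqrt p.1 = p.1 := Real.mul_self_sqrt hx0.le
      have hb : Real.sqrt p.2 * Real.sqrt p.2 = p.2 := Real.mul_self_sqrt hy0.le
      have hab : Real.sqrt p.1 < Real.sqrt p.2 := Real.sqrt_lt_sqrt hx0.le hlt
      have ha0 : 0 < Real.sqrt p.1 := Real.sqrt_pos.mpr hx0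
      rw [min_eq_left hlt.le, max_eq_right hlt.le, hh_def]
      simp only [min_eq_left hlt.le]
      rw [Real.sqrt_mul hx0.le]
      rw [div_eq_div_iff (by nlinarith) (by positivity)]
      nlinarith [ha, hb]
    · have ha : Real.sqrt p.1 * Real.sqrt p.1 = p.1 := Real.mul_self_sqrt hx0.le
      have hb : Real.sqrt p.2 * Real.sqrt p.2 = p.2 := Real.mul_self_sqrt hy0.le
      have hab : Real.sqrt p.2 < Real.sqrt p.1 := Real.sqrt_lt_sqrt hy0.le hlt
      have hb0 : 0 < Real.sqrt p.2 := Real.sqrt_pos.mpr hy0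
      rw [min_eq_right hlt.le, max_eq_left hlt.le, hh_def]
      simp only [min_eq_right hlt.le]
      rw [Real.sqrt_mul hx0.le]
      rw [div_eq_div_iff (by nlinarith) (by positivity)]
      nlinarith [ha, hb]
  -- step 2 : integrability of h on s
  have hmeas : Measurable h := by
    apply Measurable.div
    · exact (Real.continuous_sqrt.comp (continuous_fst.min continuous_snd)).measurable
    · exact ((Real.continuous_sqrt.comp continuous_fst).add
        (Real.continuous_sqrt.comp continuous_snd)).measurable
  have hsfin : volume s ≠ ⊤ := by
    rw [hs_def, Measure.volume_eq_prod, Measure.prod_prod]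
    simp [Real.volume_Ioo]
  have hint : IntegrableOn h s := by
    apply Measure.integrableOn_of_bounded hsfin hmeas.aestronglyMeasurable (M := 1)
    filter_upwards [ae_restrict_mem hs] with p hp
    obtain ⟨⟨hx0, _⟩, ⟨hy0, _⟩⟩ := hp
    have hd : 0 < Real.sqrt p.1 + Real.sqrt p.2 := by
      have : 0 < Real.sqrt p.1 := Real.sqrt_pos.mpr hx0
      positivity
    have h0 : 0 ≤ h p := by
      apply div_nonneg (Real.sqrt_nonneg _) hd.le
    have h1 : h p ≤ 1 := by
      rw [hh_def, div_le_one hd]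
      rcases min_cases p.1 p.2 with ⟨hm, _⟩ | ⟨hm, _⟩ <;> rw [hm] <;>
        nlinarith [Real.sqrt_nonneg p.1, Real.sqrt_nonneg p.2]
    rw [Real.norm_eq_abs, abs_le]
    constructor <;> linarith
  -- step 3 : Fubini
  have step3 : ∫ p in s, h p = ∫ x in Set.Ioo (0:ℝ) 1, ∫ y in Set.Ioo (0:ℝ) 1, h (x, y) := by
    rw [hs_def, Measure.volume_eq_prod]
    exact setIntegral_prod h (by rwa [← Measure.volume_eq_prod, ← hs_def])
  rw [step1, step3]
  have step4 : ∫ x in Set.Ioo (0:ℝ) 1, ∫ y in Set.Ioo (0:ℝ) 1, h (x, y)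
      = ∫ x in Set.Ioo (0:ℝ) 1,
        (-3*x + 4*x*Real.log 2 + 2*Real.sqrt x + x*Real.log x - 2*x*Real.log (1 + Real.sqrt x)) := by
    apply setIntegral_congr_fun measurableSet_Ioo
    intro x hx
    exact inner_int hx
  rw [step4]
  have step5 : ∫ x in Set.Ioo (0:ℝ) 1,
        (-3*x + 4*x*Real.log 2 + 2*Real.sqrt x + x*Real.log x - 2*x*Real.log (1 + Real.sqrt x))
      = 2 * Real.log 2 - 1 := by
    rw [← integral_Ioc_eq_integral_Ioo, ← intervalIntegral.integral_of_le (by norm_num : (0:ℝ) ≤ 1)]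
    exact outer_int
  rw [step5]
  have : Real.log 4 = 2 * Real.log 2 := by
    rw [show (4:ℝ) = 2^2 by norm_num, Real.log_pow]
    norm_num
  rw [this]
end

section
/- The orness average value over [0,1]³ of the geometric mean G(x₁,x₂,x₃) = (x₁x₂x₃)^{1/3} equals (√3 π)/2 − 47/20. -/
open MeasureTheory Set

noncomputable def phi (t : ℝ) : ℝ :=
  ((3/4)*t^((1:ℝ)/3)*(1 - t^((4:ℝ)/3)) - t*(1-t)) / (1 - t)

noncomputable def Psi (u : ℝ) : ℝ :=
  (9/4)*(u^5/5 + u^2/2 - u + (2/Real.sqrt 3)*Real.arctan ((2*u+1)/Real.sqrt 3)) - u^6/2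

lemma sqrt3_pos : (0:ℝ) < Real.sqrt 3 := Real.sqrt_pos.2 (by norm_num)
lemma sq_sqrt3 : (Real.sqrt 3)^2 = 3 := Real.sq_sqrt (by norm_num)

lemma Psi_hasDeriv (u : ℝ) :
    HasDerivAt Psi ((9/4)*(u^4 + u - 1 + 1/(u^2+u+1)) - 3*u^5) u := by
  have hs := sqrt3_pos
  have hq : (0:ℝ) < u^2+u+1 := by nlinarith [sq_nonneg (u+1/2)]
  have harc : HasDerivAt (fun u : ℝ => Real.arctan ((2*u+1)/Real.sqrt 3))
      ((1/(1+((2*u+1)/Real.sqrt 3)^2)) * (2/Real.sqrt 3)) u := by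
    have hinner : HasDerivAt (fun u : ℝ => (2*u+1)/Real.sqrt 3) (2/Real.sqrt 3) u := by
      simpa using (((hasDerivAt_id u).const_mul 2).add_const 1).div_const (Real.sqrt 3)
    exact (Real.hasDerivAt_arctan _).comp u hinner
  have h : HasDerivAt Psi
      ((9/4)*(5*u^4/5 + 2*u/2 - 1 + (2/Real.sqrt 3)*((1/(1+((2*u+1)/Real.sqrt 3)^2)) * (2/Real.sqrt 3))) - 6*u^5/2) u := by
    unfold Psi
    have := ((((((hasDerivAt_pow 5 u).div_const 5).add ((hasDerivAt_pow 2 u).div_const 2)).sub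
      (hasDerivAt_id u)).add (harc.const_mul (2/Real.sqrt 3))).const_mul (9/4)).sub
      ((hasDerivAt_pow 6 u).div_const 2)
    convert this using 2 <;> norm_num <;> rfl
  convert h using 1
  have h1 : 1+((2*u+1)/Real.sqrt 3)^2 > 0 := by positivity
  field_simp
  have hq2 : u*(u+1)+1 ≠ 0 := by nlinarith
  field_simp
  ring_nf
  nlinarith [sq_sqrt3, sq_nonneg u, hq, hs]

lemma continuous_cbrt : Continuous fun t : ℝ => t ^ ((1:ℝ)/3) :=
  continuous_iff_continuousAt.2 fun x => Real.continuousAt_rpow_const x _ (Or.inr (by norm_num))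

lemma phi_bound {t : ℝ} (ht : t ∈ Set.Ioc (0:ℝ) 1) : ‖phi t‖ ≤ 2 := by
  obtain ⟨ht0, ht1⟩ := ht
  rcases eq_or_lt_of_le ht1 with h1 | h1
  · subst h1; simp [phi]
  · set a := t ^ ((1:ℝ)/3) with ha
    have hta : t ≤ a := by
      have := Real.rpow_le_rpow_of_exponent_ge ht0 h1.le (by norm_num : (1:ℝ)/3 ≤ 1)
      rwa [Real.rpow_one] at this
    have ha1 : a ≤ 1 := Real.rpow_le_one ht0.le ht1 (by norm_num)
    have ha0 : 0 ≤ a := le_trans ht0.le hta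
    have hb : t ^ ((4:ℝ)/3) = t * a := by
      rw [ha, show (4:ℝ)/3 = 1 + 1/3 by norm_num, Real.rpow_add ht0, Real.rpow_one]
    have hd : (0:ℝ) < 1 - t := by linarith
    rw [phi, hb, ← ha, Real.norm_eq_abs, abs_div, abs_of_pos hd, div_le_iff₀ hd]
    rw [abs_le]
    have k1 : t*(1-a) ≤ 1*(1-a) := by nlinarith
    have k2 : 1-a ≤ 1-t := by linarith
    have k3 : 0 ≤ 1 - t*a := by nlinarith
    have k4 : a*(1-t*a) ≤ 1*(1-t*a) := by nlinarith
    constructor <;> nlinarith [mul_nonneg ht0.le ha0]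

lemma continuous_rpow43 : Continuous fun t : ℝ => t ^ ((4:ℝ)/3) :=
  continuous_iff_continuousAt.2 fun x => Real.continuousAt_rpow_const x _ (Or.inr (by norm_num))

lemma phi_measurable : Measurable phi := by
  unfold phi
  exact (((continuous_const.mul continuous_cbrt).mul
    (continuous_const.sub continuous_rpow43)).sub
    (continuous_id.mul (continuous_const.sub continuous_id))).measurable.div
    ((continuous_const.sub continuous_id).measurable)

lemma phi_intervalIntegrable : IntervalIntegrable phi volume 0 1 := by
  rw [intervalIntegrable_iff_integrableOn_Ioc_of_le (by norm_num)]
  apply Measure.integrableOn_of_bounded (M := 2)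
  · simp
  · exact phi_measurable.aestronglyMeasurable
  · exact (ae_restrict_iff' measurableSet_Ioc).2 (Filter.Eventually.of_forall fun t ht => phi_bound ht)

lemma F_hasDeriv {t : ℝ} (ht : t ∈ Set.Ioo (0:ℝ) 1) :
    HasDerivAt (fun t => Psi (t ^ ((1:ℝ)/3))) (phi t) t := by
  obtain ⟨ht0, ht1⟩ := ht
  set u := t ^ ((1:ℝ)/3) with hu
  have hu0 : 0 < u := Real.rpow_pos_of_pos ht0 _
  have hu1 : u < 1 := Real.rpow_lt_one ht0.le ht1 (by norm_num)
  have hut : u ^ 3 = t := by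
    rw [hu, ← Real.rpow_natCast (t ^ ((1:ℝ)/3)) 3, ← Real.rpow_mul ht0.le]
    norm_num
  have h := (Psi_hasDeriv u).comp t (Real.hasDerivAt_rpow_const (p := (1:ℝ)/3) (Or.inl ht0.ne'))
  refine h.congr_deriv ?_
  have h43 : t ^ ((4:ℝ)/3) = u ^ 4 := by
    rw [hu, ← Real.rpow_natCast (t ^ ((1:ℝ)/3)) 4, ← Real.rpow_mul ht0.le]
    norm_num
  have hm : t ^ ((1:ℝ)/3 - 1) = (u^2)⁻¹ := by
    rw [show (1:ℝ)/3 - 1 = -(2/3) by norm_num, Real.rpow_neg ht0.le, hu,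
      ← Real.rpow_natCast (t ^ ((1:ℝ)/3)) 2, ← Real.rpow_mul ht0.le]
    norm_num
  rw [phi, h43, hm, ← hu, ← hut]
  have hq : (0:ℝ) < u^2+u+1 := by nlinarith [sq_nonneg (u+1/2)]
  have hc : (1:ℝ) - u^3 ≠ 0 := by nlinarith
  field_simp
  ring

lemma arctan_sqrt3 : Real.arctan (Real.sqrt 3) = Real.pi / 3 := by
  rw [← Real.tan_pi_div_three]
  exact Real.arctan_tan (by linarith [Real.pi_pos]) (by linarith [Real.pi_pos])

lemma C_value : ∫ t in (0:ℝ)..1, phi t = Real.sqrt 3 * Real.pi / 4 - 47/40 := by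
  have hcont : ContinuousOn (fun t => Psi (t ^ ((1:ℝ)/3))) (Set.Icc 0 1) := by
    apply Continuous.continuousOn
    have hPsi : Continuous Psi := by
      unfold Psi
      have := Real.continuous_arctan
      continuity
    exact hPsi.comp continuous_cbrt
  have := intervalIntegral.integral_eq_sub_of_hasDeriv_right_of_le (by norm_num : (0:ℝ) ≤ 1)
    hcont (fun t ht => (F_hasDeriv ht).hasDerivWithinAt) phi_intervalIntegrable
  rw [this, Real.one_rpow, Real.zero_rpow (by norm_num)]
  have hs := sqrt3_pos
  have hsq := sq_sqrt3
  have h1 : ((2*1+1):ℝ)/Real.sqrt 3 = Real.sqrt 3 := by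
    rw [div_eq_iff hs.ne']
    nlinarith
  have h2 : Real.arctan ((2*0+1:ℝ)/Real.sqrt 3) = Real.pi/6 := by
    rw [show ((2*0+1:ℝ))/Real.sqrt 3 = (Real.sqrt 3)⁻¹ by rw [inv_eq_one_div]; norm_num,
      Real.arctan_inv_of_pos hs, arctan_sqrt3]
    ring
  rw [Psi, Psi, h1, h2, arctan_sqrt3]
  have hπ := Real.pi_pos
  field_simp
  ring_nf
  linear_combination (-7200 * Real.pi) * hsq

noncomputable def f3 (x y z : ℝ) : ℝ :=
  ((x*y*z) ^ ((1:ℝ)/3) - min x (min y z)) / (max x (max y z) - min x (min y z))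

noncomputable def G (x y : ℝ) : ℝ :=
  ((3/4)*(x*y)^((1:ℝ)/3)*(x^((4:ℝ)/3) - y^((4:ℝ)/3)) - y*(x-y)) / (x - y)

lemma inner_eval {x y : ℝ} (hx : x ∈ Set.Ioo (0:ℝ) 1) (hy : y ∈ Set.Ioo (0:ℝ) 1) :
    ∫ z in Set.Ioo (0:ℝ) 1, (if y < z ∧ z < x then f3 x y z else 0)
      = if y < x then G x y else 0 := by
  have hind : (fun z => if y < z ∧ z < x then f3 x y z else 0)
      = Set.indicator (Set.Ioo y x) (fun z => f3 x y z) := by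
    ext z; rw [Set.indicator_apply]; simp [Set.mem_Ioo]
  rw [hind, setIntegral_indicator measurableSet_Ioo, Set.Ioo_inter_Ioo,
    max_eq_right hy.1.le, min_eq_right hx.2.le]
  by_cases hyx : y < x
  · rw [if_pos hyx]
    have hcong : ∀ z ∈ Set.Ioo y x,
        f3 x y z = ((x*y)^((1:ℝ)/3) * z^((1:ℝ)/3) - y) * (x-y)⁻¹ := by
      intro z hz
      obtain ⟨hz1, hz2⟩ := hz
      have hz0 : (0:ℝ) ≤ z := (lt_trans hy.1 hz1).le
      rw [f3, min_eq_left hz1.le, min_eq_right hyx.le, max_eq_right hz1.le,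
        max_eq_left hz2.le, Real.mul_rpow (mul_nonneg hx.1.le hy.1.le) hz0, div_eq_mul_inv]
    rw [MeasureTheory.setIntegral_congr_fun measurableSet_Ioo hcong,
      ← MeasureTheory.integral_Ioc_eq_integral_Ioo, ← intervalIntegral.integral_of_le hyx.le]
    have hint1 : IntervalIntegrable (fun z : ℝ => (x*y)^((1:ℝ)/3) * z^((1:ℝ)/3)) volume y x :=
      (intervalIntegral.intervalIntegrable_rpow' (by norm_num)).const_mul _
    rw [intervalIntegral.integral_mul_const,
      intervalIntegral.integral_sub hint1 intervalIntegrable_const,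
      intervalIntegral.integral_const_mul, integral_rpow (Or.inl (by norm_num)),
      intervalIntegral.integral_const, G]
    have hxy : x - y ≠ 0 := sub_ne_zero.2 hyx.ne'
    field_simp
    ring
  · rw [if_neg hyx, Set.Ioo_eq_empty hyx, MeasureTheory.setIntegral_empty]

lemma G_scale {x t : ℝ} (hx : x ∈ Set.Ioo (0:ℝ) 1) (ht : t ∈ Set.uIcc (0:ℝ) 1) :
    G x (x*t) = x * phi t := by
  obtain ⟨hx0, hx1⟩ := hx
  rw [Set.uIcc_of_le (by norm_num)] at ht
  obtain ⟨ht0, ht1⟩ := ht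
  rcases eq_or_lt_of_le ht0 with h0 | h0
  · subst h0
    simp [G, phi, Real.zero_rpow]
  rcases eq_or_lt_of_le ht1 with h1 | h1
  · subst h1
    simp [G, phi]
  have hkey : x^((1:ℝ)/3) * x^((1:ℝ)/3) * x^((4:ℝ)/3) = x^2 := by
    rw [← Real.rpow_add hx0, ← Real.rpow_add hx0, ← Real.rpow_natCast x 2]
    norm_num
  have e1 : (x*(x*t))^((1:ℝ)/3) = x^((1:ℝ)/3) * x^((1:ℝ)/3) * t^((1:ℝ)/3) := by
    rw [← mul_assoc, Real.mul_rpow (mul_nonneg hx0.le hx0.le) h0.le,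
      Real.mul_rpow hx0.le hx0.le]
  have e2 : (x*t)^((4:ℝ)/3) = x^((4:ℝ)/3) * t^((4:ℝ)/3) := Real.mul_rpow hx0.le h0.le
  rw [G, phi, e1, e2]
  have h1t : (1:ℝ) - t ≠ 0 := sub_ne_zero.2 h1.ne'
  have hxt : x - x*t ≠ 0 := by
    have : x - x*t = x*(1-t) := by ring
    rw [this]; exact mul_ne_zero hx0.ne' h1t
  set a := x^((1:ℝ)/3) with ha
  set b := t^((1:ℝ)/3) with hb
  set c := x^((4:ℝ)/3) with hc
  set d := t^((4:ℝ)/3) with hd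
  rw [mul_div_assoc', div_eq_div_iff hxt h1t]
  linear_combination ((1-t)*(3/4)*b*(1-d))*hkey

lemma mid_eval {x : ℝ} (hx : x ∈ Set.Ioo (0:ℝ) 1) :
    ∫ y in Set.Ioo (0:ℝ) 1, (if y < x then G x y else 0)
      = x^2 * (Real.sqrt 3 * Real.pi / 4 - 47/40) := by
  have hind : (fun y => if y < x then G x y else 0)
      = Set.indicator (Set.Iio x) (fun y => G x y) := by
    ext y; rw [Set.indicator_apply]; simp [Set.mem_Iio]
  rw [hind, setIntegral_indicator measurableSet_Iio]
  have hinter : Set.Ioo (0:ℝ) 1 ∩ Set.Iio x = Set.Ioo 0 x := by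
    ext y; simp only [Set.mem_inter_iff, Set.mem_Ioo, Set.mem_Iio]
    constructor
    · rintro ⟨⟨h1, h2⟩, h3⟩; exact ⟨h1, h3⟩
    · rintro ⟨h1, h3⟩; exact ⟨⟨h1, lt_trans h3 hx.2⟩, h3⟩
  rw [hinter, ← MeasureTheory.integral_Ioc_eq_integral_Ioo,
    ← intervalIntegral.integral_of_le hx.1.le]
  have hsub := intervalIntegral.integral_comp_mul_left (a := 0) (b := 1) (fun y => G x y) hx.1.ne'
  rw [mul_zero, mul_one] at hsub
  have h2 : ∫ y in (0:ℝ)..x, G x y = x • ∫ t in (0:ℝ)..1, G x (x*t) := by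
    rw [hsub, smul_smul, mul_inv_cancel₀ hx.1.ne', one_smul]
  rw [h2, intervalIntegral.integral_congr (g := fun t => x * phi t)
    (fun t ht => G_scale hx ht), intervalIntegral.integral_const_mul, C_value,
    smul_eq_mul]
  ring

lemma f3_measurable : Measurable fun p : ℝ × ℝ × ℝ => f3 p.1 p.2.1 p.2.2 := by
  unfold f3
  have hr : Measurable fun p : ℝ × ℝ × ℝ => (p.1 * p.2.1 * p.2.2) ^ ((1:ℝ)/3) :=
    continuous_cbrt.measurable.comp ((measurable_fst.mul measurable_snd.fst).mul measurable_snd.snd)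
  have hmin : Measurable fun p : ℝ × ℝ × ℝ => min p.1 (min p.2.1 p.2.2) :=
    measurable_fst.min (measurable_snd.fst.min measurable_snd.snd)
  have hmax : Measurable fun p : ℝ × ℝ × ℝ => max p.1 (max p.2.1 p.2.2) :=
    measurable_fst.max (measurable_snd.fst.max measurable_snd.snd)
  exact (hr.sub hmin).div (hmax.sub hmin)

lemma f3_bound {x y z : ℝ} (hx : 0 < x) (hy : 0 < y) (hz : 0 < z) : |f3 x y z| ≤ 1 := by
  set m := min x (min y z) with hm
  set M := max x (max y z) with hM
  have hm0 : 0 < m := lt_min hx (lt_min hy hz)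
  have hmx : m ≤ x := min_le_left _ _
  have hmy : m ≤ y := le_trans (min_le_right _ _) (min_le_left _ _)
  have hmz : m ≤ z := le_trans (min_le_right _ _) (min_le_right _ _)
  have hMx : x ≤ M := le_max_left _ _
  have hMy : y ≤ M := le_trans (le_max_left _ _) (le_max_right _ _)
  have hMz : z ≤ M := le_trans (le_max_right _ _) (le_max_right _ _)
  have hmM : m ≤ M := hmx.trans hMx
  rcases eq_or_lt_of_le hmM with he | he
  · rw [f3, ← hm, ← hM, ← he, sub_self, div_zero]; norm_num
  · have hcube : ∀ a : ℝ, 0 < a → (a*a*a) ^ ((1:ℝ)/3) = a := by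
      intro a ha
      rw [show a*a*a = a^(3:ℕ) by ring, ← Real.rpow_natCast a 3, ← Real.rpow_mul ha.le]
      norm_num
    have hg1 : m ≤ (x*y*z) ^ ((1:ℝ)/3) := by
      rw [← hcube m hm0]
      apply Real.rpow_le_rpow (by positivity) _ (by norm_num)
      have h2 : m*m ≤ x*y := mul_le_mul hmx hmy hm0.le (hm0.le.trans hmx)
      exact mul_le_mul h2 hmz hm0.le (by positivity)
    have hg2 : (x*y*z) ^ ((1:ℝ)/3) ≤ M := by
      have hM0 : 0 < M := hm0.trans_le hmM
      rw [← hcube M hM0]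
      apply Real.rpow_le_rpow (by positivity) _ (by norm_num)
      have h2 : x*y ≤ M*M := mul_le_mul hMx hMy hy.le (by positivity)
      exact mul_le_mul h2 hMz hz.le (by positivity)
    rw [f3, ← hm, ← hM, abs_div, abs_of_nonneg (sub_nonneg.2 hg1),
      abs_of_pos (sub_pos.2 he), div_le_one (sub_pos.2 he)]
    linarith

lemma f3_swap_yz (x y z : ℝ) : f3 x z y = f3 x y z := by
  rw [f3, f3, min_comm z y, max_comm z y, show x*z*y = x*y*z by ring]

lemma f3_swap_xy (x y z : ℝ) : f3 y x z = f3 x y z := by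
  rw [f3, f3, min_left_comm y x z, max_left_comm y x z, show y*x*z = x*y*z by ring]

def B3 (x y z : ℝ) : Prop := (0<x∧x<1) ∧ (0<y∧y<1) ∧ (0<z∧z<1)

open Classical in
noncomputable def clip (c : ℝ → ℝ → ℝ → Prop) (x y z : ℝ) : ℝ :=
  if B3 x y z ∧ c x y z then f3 x y z else 0

lemma clip_bound (c : ℝ → ℝ → ℝ → Prop) (x y z : ℝ) : |clip c x y z| ≤ 1 := by
  rw [clip]
  split_ifs with h
  · exact f3_bound h.1.1.1 h.1.2.1.1 h.1.2.2.1
  · norm_num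

lemma B3_measurableSet : MeasurableSet {p : ℝ × ℝ × ℝ | B3 p.1 p.2.1 p.2.2} := by
  unfold B3
  exact (((measurableSet_lt measurable_const measurable_fst).inter
      (measurableSet_lt measurable_fst measurable_const)).inter
    (((measurableSet_lt measurable_const measurable_snd.fst).inter
      (measurableSet_lt measurable_snd.fst measurable_const)).inter
    ((measurableSet_lt measurable_const measurable_snd.snd).inter
      (measurableSet_lt measurable_snd.snd measurable_const))))

lemma clip_measurable {c : ℝ → ℝ → ℝ → Prop}
    (hc : MeasurableSet {p : ℝ × ℝ × ℝ | c p.1 p.2.1 p.2.2}) :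
    Measurable fun p : ℝ × ℝ × ℝ => clip c p.1 p.2.1 p.2.2 := by
  unfold clip
  exact Measurable.ite (B3_measurableSet.inter hc) f3_measurable measurable_const

lemma box2_integrableOn {H : ℝ × ℝ → ℝ} (hm : Measurable H) (hb : ∀ p, |H p| ≤ 1) :
    Integrable H ((volume.restrict (Set.Ioo (0:ℝ) 1)).prod (volume.restrict (Set.Ioo (0:ℝ) 1))) := by
  rw [Measure.prod_restrict, ← MeasureTheory.IntegrableOn]
  apply Measure.integrableOn_of_bounded (M := 1)
  · rw [Measure.prod_prod, Real.volume_Ioo]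
    simp
  · exact hm.aestronglyMeasurable
  · exact MeasureTheory.ae_of_all _ fun p => by simpa using hb p

lemma swap23 (H : ℝ → ℝ → ℝ → ℝ)
    (hm : Measurable fun p : ℝ × ℝ × ℝ => H p.1 p.2.1 p.2.2)
    (hb : ∀ x y z, |H x y z| ≤ 1) :
    (∫ x in Set.Ioo (0:ℝ) 1, ∫ y in Set.Ioo (0:ℝ) 1, ∫ z in Set.Ioo (0:ℝ) 1, H x y z)
      = ∫ x in Set.Ioo (0:ℝ) 1, ∫ y in Set.Ioo (0:ℝ) 1, ∫ z in Set.Ioo (0:ℝ) 1, H x z y := by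
  refine setIntegral_congr_fun measurableSet_Ioo fun x _ => ?_
  exact integral_integral_swap (box2_integrableOn
    (hm.comp ((measurable_const.prodMk measurable_id))) (fun p => hb x p.1 p.2))

lemma swap12 (H : ℝ → ℝ → ℝ → ℝ)
    (hm : Measurable fun p : ℝ × ℝ × ℝ => H p.1 p.2.1 p.2.2)
    (hb : ∀ x y z, |H x y z| ≤ 1) :
    (∫ x in Set.Ioo (0:ℝ) 1, ∫ y in Set.Ioo (0:ℝ) 1, ∫ z in Set.Ioo (0:ℝ) 1, H x y z)
      = ∫ x in Set.Ioo (0:ℝ) 1, ∫ y in Set.Ioo (0:ℝ) 1, ∫ z in Set.Ioo (0:ℝ) 1, H y x z := by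
  have hmf : StronglyMeasurable fun q : (ℝ × ℝ) × ℝ => H q.1.1 q.1.2 q.2 :=
    (hm.comp ((measurable_fst.fst).prodMk ((measurable_fst.snd).prodMk measurable_snd))).stronglyMeasurable
  have hK : Integrable (Function.uncurry fun x y => ∫ z in Set.Ioo (0:ℝ) 1, H x y z)
      ((volume.restrict (Set.Ioo (0:ℝ) 1)).prod (volume.restrict (Set.Ioo (0:ℝ) 1))) := by
    rw [Measure.prod_restrict, ← MeasureTheory.IntegrableOn]
    apply Measure.integrableOn_of_bounded (M := 1)
    · rw [Measure.prod_prod, Real.volume_Ioo]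
      simp
    · exact (hmf.integral_prod_right' (ν := volume.restrict (Set.Ioo (0:ℝ) 1))).aestronglyMeasurable
    · apply MeasureTheory.ae_of_all
      intro p
      have := norm_setIntegral_le_of_norm_le_const (μ := volume) (s := Set.Ioo (0:ℝ) 1)
        (C := 1) (f := fun z => H p.1 p.2 z) (by simp)
        (fun z _ => by simpa using hb p.1 p.2 z)
      simpa [Function.uncurry_def] using this
  exact integral_integral_swap hK

def c1p (x y z : ℝ) : Prop := y<z ∧ z<x
def c2p (x y z : ℝ) : Prop := z<y ∧ y<x
def c3p (x y z : ℝ) : Prop := x<z ∧ z<y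
def c4p (x y z : ℝ) : Prop := z<x ∧ x<y
def c5p (x y z : ℝ) : Prop := y<x ∧ x<z
def c6p (x y z : ℝ) : Prop := x<y ∧ y<z

lemma decomp {x y z : ℝ} (hB : B3 x y z) (hxy : x ≠ y) (hyz : y ≠ z) (hxz : x ≠ z) :
    f3 x y z = clip c1p x y z + clip c2p x y z + clip c3p x y z
      + clip c4p x y z + clip c5p x y z + clip c6p x y z := by
  unfold clip c1p c2p c3p c4p c5p c6p
  rcases lt_trichotomy x y with h1 | h1 | h1
  · rcases lt_trichotomy y z with h2 | h2 | h2
    · -- x<y<z : c6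
      rw [if_neg (by rintro ⟨-, a, b⟩; linarith), if_neg (by rintro ⟨-, a, b⟩; linarith),
        if_neg (by rintro ⟨-, a, b⟩; linarith), if_neg (by rintro ⟨-, a, b⟩; linarith),
        if_neg (by rintro ⟨-, a, b⟩; linarith), if_pos ⟨hB, h1, h2⟩]
      ring
    · exact absurd h2 hyz
    · rcases lt_trichotomy x z with h3 | h3 | h3
      · -- x<z<y : c3
        rw [if_neg (by rintro ⟨-, a, b⟩; linarith), if_neg (by rintro ⟨-, a, b⟩; linarith),
          if_pos ⟨hB, h3, h2⟩, if_neg (by rintro ⟨-, a, b⟩; linarith),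
          if_neg (by rintro ⟨-, a, b⟩; linarith), if_neg (by rintro ⟨-, a, b⟩; linarith)]
        ring
      · exact absurd h3 hxz
      · -- z<x<y : c4
        rw [if_neg (by rintro ⟨-, a, b⟩; linarith), if_neg (by rintro ⟨-, a, b⟩; linarith),
          if_neg (by rintro ⟨-, a, b⟩; linarith), if_pos ⟨hB, h3, h1⟩,
          if_neg (by rintro ⟨-, a, b⟩; linarith), if_neg (by rintro ⟨-, a, b⟩; linarith)]
        ring
  · exact absurd h1 hxy
  · rcases lt_trichotomy y z with h2 | h2 | h2
    · rcases lt_trichotomy x z with h3 | h3 | h3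
      · -- y<x<z : c5
        rw [if_neg (by rintro ⟨-, a, b⟩; linarith), if_neg (by rintro ⟨-, a, b⟩; linarith),
          if_neg (by rintro ⟨-, a, b⟩; linarith), if_neg (by rintro ⟨-, a, b⟩; linarith),
          if_pos ⟨hB, h1, h3⟩, if_neg (by rintro ⟨-, a, b⟩; linarith)]
        ring
      · exact absurd h3 hxz
      · -- y<z<x : c1
        rw [if_pos ⟨hB, h2, h3⟩, if_neg (by rintro ⟨-, a, b⟩; linarith),
          if_neg (by rintro ⟨-, a, b⟩; linarith), if_neg (by rintro ⟨-, a, b⟩; linarith),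
          if_neg (by rintro ⟨-, a, b⟩; linarith), if_neg (by rintro ⟨-, a, b⟩; linarith)]
        ring
    · exact absurd h2 hyz
    · -- z<y<x : c2
      rw [if_neg (by rintro ⟨-, a, b⟩; linarith), if_pos ⟨hB, h2, h1⟩,
        if_neg (by rintro ⟨-, a, b⟩; linarith), if_neg (by rintro ⟨-, a, b⟩; linarith),
        if_neg (by rintro ⟨-, a, b⟩; linarith), if_neg (by rintro ⟨-, a, b⟩; linarith)]
      ring

lemma null1 : (volume : Measure (ℝ×ℝ×ℝ)) {p : ℝ×ℝ×ℝ | p.1 = p.2.1} = 0 := by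
  rw [Measure.volume_eq_prod,
    Measure.prod_apply (measurableSet_eq_fun measurable_fst measurable_snd.fst)]
  have h : ∀ x : ℝ, (volume : Measure (ℝ×ℝ)) (Prod.mk x ⁻¹' {p : ℝ×ℝ×ℝ | p.1 = p.2.1}) = 0 := by
    intro x
    have he : Prod.mk x ⁻¹' {p : ℝ×ℝ×ℝ | p.1 = p.2.1} = ({x} : Set ℝ) ×ˢ (Set.univ : Set ℝ) := by
      ext q; constructor
      · intro hq; exact ⟨hq.symm ▸ rfl, Set.mem_univ _⟩
      · rintro ⟨hq, -⟩; exact (Set.mem_singleton_iff.1 hq).symm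
    rw [he, Measure.volume_eq_prod, Measure.prod_prod]
    simp
  simp_rw [h]
  exact lintegral_zero

lemma null2 : (volume : Measure (ℝ×ℝ×ℝ)) {p : ℝ×ℝ×ℝ | p.1 = p.2.2} = 0 := by
  rw [Measure.volume_eq_prod,
    Measure.prod_apply (measurableSet_eq_fun measurable_fst measurable_snd.snd)]
  have h : ∀ x : ℝ, (volume : Measure (ℝ×ℝ)) (Prod.mk x ⁻¹' {p : ℝ×ℝ×ℝ | p.1 = p.2.2}) = 0 := by
    intro x
    have he : Prod.mk x ⁻¹' {p : ℝ×ℝ×ℝ | p.1 = p.2.2} = (Set.univ : Set ℝ) ×ˢ ({x} : Set ℝ) := by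
      ext q; constructor
      · intro hq; exact ⟨Set.mem_univ _, hq.symm ▸ rfl⟩
      · rintro ⟨-, hq⟩; exact (Set.mem_singleton_iff.1 hq).symm
    rw [he, Measure.volume_eq_prod, Measure.prod_prod]
    simp
  simp_rw [h]
  exact lintegral_zero

lemma null3 : (volume : Measure (ℝ×ℝ×ℝ)) {p : ℝ×ℝ×ℝ | p.2.1 = p.2.2} = 0 := by
  rw [Measure.volume_eq_prod,
    Measure.prod_apply (measurableSet_eq_fun measurable_snd.fst measurable_snd.snd)]
  have hdiag : (volume : Measure (ℝ×ℝ)) {q : ℝ×ℝ | q.1 = q.2} = 0 := by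
    rw [Measure.volume_eq_prod,
      Measure.prod_apply (measurableSet_eq_fun measurable_fst measurable_snd)]
    have h : ∀ a : ℝ, (volume : Measure ℝ) (Prod.mk a ⁻¹' {q : ℝ×ℝ | q.1 = q.2}) = 0 := by
      intro a
      have he : Prod.mk a ⁻¹' {q : ℝ×ℝ | q.1 = q.2} = ({a} : Set ℝ) := by
        ext b; simp [eq_comm]
      rw [he]; exact Real.volume_singleton
    simp_rw [h]
    exact lintegral_zero
  have h : ∀ x : ℝ, (volume : Measure (ℝ×ℝ)) (Prod.mk x ⁻¹' {p : ℝ×ℝ×ℝ | p.2.1 = p.2.2}) = 0 := by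
    intro x
    have he : Prod.mk x ⁻¹' {p : ℝ×ℝ×ℝ | p.2.1 = p.2.2} = {q : ℝ×ℝ | q.1 = q.2} := rfl
    rw [he]; exact hdiag
  simp_rw [h]
  exact lintegral_zero

lemma box3_integrableOn {H : ℝ → ℝ → ℝ → ℝ}
    (hm : Measurable fun p : ℝ×ℝ×ℝ => H p.1 p.2.1 p.2.2) (hb : ∀ x y z, |H x y z| ≤ 1) :
    IntegrableOn (fun p : ℝ×ℝ×ℝ => H p.1 p.2.1 p.2.2)
      ((Set.Ioo (0:ℝ) 1) ×ˢ ((Set.Ioo (0:ℝ) 1) ×ˢ (Set.Ioo (0:ℝ) 1))) volume := by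
  apply Measure.integrableOn_of_bounded (M := 1)
  · rw [Measure.volume_eq_prod, Measure.prod_prod, Measure.volume_eq_prod, Measure.prod_prod,
      Real.volume_Ioo]
    simp
  · exact hm.aestronglyMeasurable
  · exact MeasureTheory.ae_of_all _ fun p => by simpa using hb p.1 p.2.1 p.2.2

lemma box3_integral {H : ℝ → ℝ → ℝ → ℝ}
    (hm : Measurable fun p : ℝ×ℝ×ℝ => H p.1 p.2.1 p.2.2) (hb : ∀ x y z, |H x y z| ≤ 1) :
    (∫ p in (Set.Ioo (0:ℝ) 1) ×ˢ ((Set.Ioo (0:ℝ) 1) ×ˢ (Set.Ioo (0:ℝ) 1)),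
        H p.1 p.2.1 p.2.2)
      = ∫ x in Set.Ioo (0:ℝ) 1, ∫ y in Set.Ioo (0:ℝ) 1, ∫ z in Set.Ioo (0:ℝ) 1, H x y z := by
  have h1 := box3_integrableOn hm hb
  rw [MeasureTheory.IntegrableOn, Measure.volume_eq_prod] at h1
  rw [Measure.volume_eq_prod, setIntegral_prod _ h1]
  refine setIntegral_congr_fun measurableSet_Ioo fun x _ => ?_
  have h2 := box2_integrableOn (H := fun q : ℝ×ℝ => H x q.1 q.2)
    (hm.comp (measurable_const.prodMk measurable_id)) (fun q => hb x q.1 q.2)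
  rw [Measure.prod_restrict, ← MeasureTheory.IntegrableOn] at h2
  rw [Measure.volume_eq_prod, setIntegral_prod _ h2]

lemma B3_swap_yz (x y z : ℝ) : B3 x z y ↔ B3 x y z := by unfold B3; tauto
lemma B3_swap_xy (x y z : ℝ) : B3 y x z ↔ B3 x y z := by unfold B3; tauto

lemma clip_swap_yz {c c' : ℝ → ℝ → ℝ → Prop} (h : ∀ x y z, c x z y ↔ c' x y z)
    (x y z : ℝ) : clip c x z y = clip c' x y z := by
  classical
  unfold clip
  exact if_congr (and_congr (B3_swap_yz x y z) (h x y z)) (f3_swap_yz x y z) rfl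

lemma clip_swap_xy {c c' : ℝ → ℝ → ℝ → Prop} (h : ∀ x y z, c y x z ↔ c' x y z)
    (x y z : ℝ) : clip c y x z = clip c' x y z := by
  classical
  unfold clip
  exact if_congr (and_congr (B3_swap_xy x y z) (h x y z)) (f3_swap_xy x y z) rfl

section conds
open Set

lemma meas_c1p : MeasurableSet {p : ℝ×ℝ×ℝ | c1p p.1 p.2.1 p.2.2} := by
  unfold c1p
  exact (measurableSet_lt measurable_snd.fst measurable_snd.snd).inter
    (measurableSet_lt measurable_snd.snd measurable_fst)
lemma meas_c2p : MeasurableSet {p : ℝ×ℝ×ℝ | c2p p.1 p.2.1 p.2.2} := by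
  unfold c2p
  exact (measurableSet_lt measurable_snd.snd measurable_snd.fst).inter
    (measurableSet_lt measurable_snd.fst measurable_fst)
lemma meas_c3p : MeasurableSet {p : ℝ×ℝ×ℝ | c3p p.1 p.2.1 p.2.2} := by
  unfold c3p
  exact (measurableSet_lt measurable_fst measurable_snd.snd).inter
    (measurableSet_lt measurable_snd.snd measurable_snd.fst)
lemma meas_c4p : MeasurableSet {p : ℝ×ℝ×ℝ | c4p p.1 p.2.1 p.2.2} := by
  unfold c4p
  exact (measurableSet_lt measurable_snd.snd measurable_fst).inter
    (measurableSet_lt measurable_fst measurable_snd.fst)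
lemma meas_c5p : MeasurableSet {p : ℝ×ℝ×ℝ | c5p p.1 p.2.1 p.2.2} := by
  unfold c5p
  exact (measurableSet_lt measurable_snd.fst measurable_fst).inter
    (measurableSet_lt measurable_fst measurable_snd.snd)
lemma meas_c6p : MeasurableSet {p : ℝ×ℝ×ℝ | c6p p.1 p.2.1 p.2.2} := by
  unfold c6p
  exact (measurableSet_lt measurable_fst measurable_snd.fst).inter
    (measurableSet_lt measurable_snd.fst measurable_snd.snd)
end conds

noncomputable def It (c : ℝ → ℝ → ℝ → Prop) : ℝ :=
  ∫ x in Set.Ioo (0:ℝ) 1, ∫ y in Set.Ioo (0:ℝ) 1, ∫ z in Set.Ioo (0:ℝ) 1, clip c x y z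

lemma It2_eq : It c2p = It c1p := by
  unfold It
  rw [swap23 _ (clip_measurable meas_c2p) (clip_bound _)]
  simp_rw [clip_swap_yz (c := c2p) (c' := c1p) (fun x y z => by unfold c1p c2p; tauto)]

lemma It4_eq : It c4p = It c1p := by
  unfold It
  rw [swap12 _ (clip_measurable meas_c4p) (clip_bound _)]
  simp_rw [clip_swap_xy (c := c4p) (c' := c2p) (fun x y z => by unfold c2p c4p; tauto)]
  exact It2_eq

lemma It3_eq : It c3p = It c1p := by
  unfold It
  rw [swap12 _ (clip_measurable meas_c3p) (clip_bound _)]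
  simp_rw [clip_swap_xy (c := c3p) (c' := c1p) (fun x y z => by unfold c1p c3p; tauto)]

lemma It6_eq : It c6p = It c1p := by
  unfold It
  rw [swap23 _ (clip_measurable meas_c6p) (clip_bound _)]
  simp_rw [clip_swap_yz (c := c6p) (c' := c3p) (fun x y z => by unfold c3p c6p; tauto)]
  exact It3_eq

lemma It5_eq : It c5p = It c1p := by
  unfold It
  rw [swap23 _ (clip_measurable meas_c5p) (clip_bound _)]
  simp_rw [clip_swap_yz (c := c5p) (c' := c4p) (fun x y z => by unfold c4p c5p; tauto)]
  exact It4_eq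

lemma It1_eval : It c1p = (Real.sqrt 3 * Real.pi / 4 - 47/40)/3 := by
  unfold It
  have houter : ∀ x ∈ Set.Ioo (0:ℝ) 1,
      (∫ y in Set.Ioo (0:ℝ) 1, ∫ z in Set.Ioo (0:ℝ) 1, clip c1p x y z)
        = x^2 * (Real.sqrt 3 * Real.pi / 4 - 47/40) := by
    intro x hx
    have hmid : ∀ y ∈ Set.Ioo (0:ℝ) 1,
        (∫ z in Set.Ioo (0:ℝ) 1, clip c1p x y z) = if y < x then G x y else 0 := by
      intro y hy
      have hz : ∀ z ∈ Set.Ioo (0:ℝ) 1,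
          clip c1p x y z = if y < z ∧ z < x then f3 x y z else 0 := by
        intro z hz
        classical
        rw [clip]
        exact if_congr ⟨fun h => h.2, fun h => ⟨⟨⟨hx.1,hx.2⟩,⟨hy.1,hy.2⟩,⟨hz.1,hz.2⟩⟩, h⟩⟩ rfl rfl
      rw [setIntegral_congr_fun measurableSet_Ioo hz, inner_eval hx hy]
    rw [setIntegral_congr_fun measurableSet_Ioo hmid, mid_eval hx]
  rw [setIntegral_congr_fun measurableSet_Ioo houter,
    ← MeasureTheory.integral_Ioc_eq_integral_Ioo, ← intervalIntegral.integral_of_le zero_le_one,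
    intervalIntegral.integral_mul_const, integral_pow]
  norm_num
  ring

lemma box_eval :
    (∫ p in (Set.Ioo (0:ℝ) 1) ×ˢ ((Set.Ioo (0:ℝ) 1) ×ˢ (Set.Ioo (0:ℝ) 1)),
        f3 p.1 p.2.1 p.2.2)
      = Real.sqrt 3 * Real.pi / 2 - 47/20 := by
  set S3V := (Set.Ioo (0:ℝ) 1) ×ˢ ((Set.Ioo (0:ℝ) 1) ×ˢ (Set.Ioo (0:ℝ) 1)) with hS3V
  have hS : MeasurableSet S3V :=
    measurableSet_Ioo.prod (measurableSet_Ioo.prod measurableSet_Ioo)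
  have hNN : (volume : Measure (ℝ×ℝ×ℝ))
      (({p | p.1 = p.2.1} ∪ {p | p.1 = p.2.2}) ∪ {p : ℝ×ℝ×ℝ | p.2.1 = p.2.2}) = 0 :=
    measure_union_null (measure_union_null null1 null2) null3
  have hae : (fun p : ℝ×ℝ×ℝ => f3 p.1 p.2.1 p.2.2) =ᵐ[volume.restrict S3V]
      (fun p => clip c1p p.1 p.2.1 p.2.2 + clip c2p p.1 p.2.1 p.2.2 + clip c3p p.1 p.2.1 p.2.2
        + clip c4p p.1 p.2.1 p.2.2 + clip c5p p.1 p.2.1 p.2.2 + clip c6p p.1 p.2.1 p.2.2) := by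
    rw [Filter.EventuallyEq, ae_restrict_iff' hS]
    filter_upwards [measure_eq_zero_iff_ae_notMem.mp hNN] with p hp hpS
    have hB : B3 p.1 p.2.1 p.2.2 := by
      obtain ⟨h1, h2, h3⟩ := hpS
      exact ⟨⟨h1.1, h1.2⟩, ⟨h2.1, h2.2⟩, ⟨h3.1, h3.2⟩⟩
    simp only [Set.mem_union, Set.mem_setOf_eq] at hp
    push_neg at hp
    exact decomp hB hp.1.1 hp.2 hp.1.2
  rw [MeasureTheory.integral_congr_ae hae]
  have i1 : Integrable (fun p : ℝ×ℝ×ℝ => clip c1p p.1 p.2.1 p.2.2) (volume.restrict S3V) :=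
    box3_integrableOn (clip_measurable meas_c1p) (clip_bound _)
  have i2 : Integrable (fun p : ℝ×ℝ×ℝ => clip c2p p.1 p.2.1 p.2.2) (volume.restrict S3V) :=
    box3_integrableOn (clip_measurable meas_c2p) (clip_bound _)
  have i3 : Integrable (fun p : ℝ×ℝ×ℝ => clip c3p p.1 p.2.1 p.2.2) (volume.restrict S3V) :=
    box3_integrableOn (clip_measurable meas_c3p) (clip_bound _)
  have i4 : Integrable (fun p : ℝ×ℝ×ℝ => clip c4p p.1 p.2.1 p.2.2) (volume.restrict S3V) :=
    box3_integrableOn (clip_measurable meas_c4p) (clip_bound _)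
  have i5 : Integrable (fun p : ℝ×ℝ×ℝ => clip c5p p.1 p.2.1 p.2.2) (volume.restrict S3V) :=
    box3_integrableOn (clip_measurable meas_c5p) (clip_bound _)
  have i6 : Integrable (fun p : ℝ×ℝ×ℝ => clip c6p p.1 p.2.1 p.2.2) (volume.restrict S3V) :=
    box3_integrableOn (clip_measurable meas_c6p) (clip_bound _)
  have i12 : Integrable (fun p : ℝ×ℝ×ℝ => clip c1p p.1 p.2.1 p.2.2 + clip c2p p.1 p.2.1 p.2.2)
      (volume.restrict S3V) := i1.add i2
  have i13 : Integrable (fun p : ℝ×ℝ×ℝ => clip c1p p.1 p.2.1 p.2.2 + clip c2p p.1 p.2.1 p.2.2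
      + clip c3p p.1 p.2.1 p.2.2) (volume.restrict S3V) := i12.add i3
  have i14 : Integrable (fun p : ℝ×ℝ×ℝ => clip c1p p.1 p.2.1 p.2.2 + clip c2p p.1 p.2.1 p.2.2
      + clip c3p p.1 p.2.1 p.2.2 + clip c4p p.1 p.2.1 p.2.2) (volume.restrict S3V) := i13.add i4
  have i15 : Integrable (fun p : ℝ×ℝ×ℝ => clip c1p p.1 p.2.1 p.2.2 + clip c2p p.1 p.2.1 p.2.2
      + clip c3p p.1 p.2.1 p.2.2 + clip c4p p.1 p.2.1 p.2.2 + clip c5p p.1 p.2.1 p.2.2)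
      (volume.restrict S3V) := i14.add i5
  rw [MeasureTheory.integral_add i15 i6, MeasureTheory.integral_add i14 i5,
    MeasureTheory.integral_add i13 i4, MeasureTheory.integral_add i12 i3,
    MeasureTheory.integral_add i1 i2]
  have e : ∀ (c : ℝ → ℝ → ℝ → Prop), MeasurableSet {p : ℝ×ℝ×ℝ | c p.1 p.2.1 p.2.2} →
      (∫ p in S3V, clip c p.1 p.2.1 p.2.2) = It c := fun c hc =>
    box3_integral (clip_measurable hc) (clip_bound _)
  rw [e c1p meas_c1p, e c2p meas_c2p, e c3p meas_c3p, e c4p meas_c4p, e c5p meas_c5p,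
    e c6p meas_c6p, It2_eq, It3_eq, It4_eq, It5_eq, It6_eq, It1_eval]
  ring

noncomputable def E3 : (ℝ × ℝ × ℝ) ≃ᵐ (Fin 3 → ℝ) :=
  ((MeasurableEquiv.refl ℝ).prodCongr (MeasurableEquiv.piFinTwo (fun _ : Fin 2 => ℝ)).symm).trans
    (MeasurableEquiv.piFinSuccAbove (fun _ : Fin 3 => ℝ) 0).symm

lemma E3_mp : MeasurePreserving E3 volume volume :=
  ((volume_preserving_piFinSuccAbove (fun _ : Fin 3 => ℝ) 0).symm _).comp
    ((MeasurePreserving.id volume).prod ((volume_preserving_piFinTwo (fun _ : Fin 2 => ℝ)).symm _))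

lemma E3_pre : E3 ⁻¹' (Set.univ.pi fun _ : Fin 3 => Set.Ioo (0 : ℝ) 1)
    = (Set.Ioo (0:ℝ) 1) ×ˢ ((Set.Ioo (0:ℝ) 1) ×ˢ (Set.Ioo (0:ℝ) 1)) := by
  ext p
  simp only [Set.mem_preimage, Set.mem_pi, Set.mem_univ, forall_true_left, Set.mem_prod]
  constructor
  · intro h
    exact ⟨h 0, h 1, h 2⟩
  · rintro ⟨h1, h2, h3⟩ i
    fin_cases i
    · exact h1
    · exact h2
    · exact h3

/-- The orness average value over `[0,1]³` of the geometric mean `G(x₁,x₂,x₃) = (x₁x₂x₃)^{1/3}`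
equals `√3 π/2 − 47/20`. -/
theorem orness_average_geometric_mean_three :
    (∫ x in Set.univ.pi fun _ : Fin 3 => Set.Ioo (0 : ℝ) 1,
        ((x 0 * x 1 * x 2) ^ ((1 : ℝ) / 3) - min (x 0) (min (x 1) (x 2))) /
          (max (x 0) (max (x 1) (x 2)) - min (x 0) (min (x 1) (x 2))))
      = Real.sqrt 3 * Real.pi / 2 - 47 / 20 := by
  have key := E3_mp.setIntegral_preimage_emb E3.measurableEmbedding
    (fun x : Fin 3 → ℝ => ((x 0 * x 1 * x 2) ^ ((1 : ℝ) / 3) - min (x 0) (min (x 1) (x 2))) /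
      (max (x 0) (max (x 1) (x 2)) - min (x 0) (min (x 1) (x 2))))
    (Set.univ.pi fun _ : Fin 3 => Set.Ioo (0 : ℝ) 1)
  rw [← key, E3_pre]
  have : ∀ p : ℝ×ℝ×ℝ, ((E3 p 0 * E3 p 1 * E3 p 2) ^ ((1 : ℝ) / 3)
      - min (E3 p 0) (min (E3 p 1) (E3 p 2))) /
      (max (E3 p 0) (max (E3 p 1) (E3 p 2)) - min (E3 p 0) (min (E3 p 1) (E3 p 2)))
      = f3 p.1 p.2.1 p.2.2 := fun p => rfl
  simp_rw [this]
  exact box_eval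
end

section
/- For every integer n ≥ 3, ∫_0^1 ∫_0^v (v^{1+1/n} − u^{1+1/n})^{n−2} u^{1/n} v^{1/n} / (v − u) du dv = ∫_0^1 x^n (1 − x^{n+1})^{n−2} / (1 − x^n) dx. -/
open MeasureTheory

/-- For every integer `n ≥ 3`,
`∫_0^1 ∫_0^v (v^{1+1/n} − u^{1+1/n})^{n−2} u^{1/n} v^{1/n}/(v−u) du dv
  = ∫_0^1 xⁿ(1−x^{n+1})^{n−2}/(1−xⁿ) dx`. -/
theorem double_integral_eq_single_integral (n : ℕ) (hn : 3 ≤ n) :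
    (∫ v in Set.Ioo (0 : ℝ) 1, ∫ u in Set.Ioo (0 : ℝ) v,
        (v ^ (1 + 1 / (n : ℝ)) - u ^ (1 + 1 / (n : ℝ))) ^ (n - 2) *
            u ^ (1 / (n : ℝ)) * v ^ (1 / (n : ℝ)) / (v - u))
      = ∫ x in Set.Ioo (0 : ℝ) 1, x ^ n * (1 - x ^ (n + 1)) ^ (n - 2) / (1 - x ^ n) := by
  have hn0 : (n : ℝ) ≠ 0 := by positivity
  have hnpos : 0 < n := by omega
  set g : ℝ → ℝ := fun t => (1 - t ^ (1 + 1 / (n : ℝ))) ^ (n - 2) * t ^ (1 / (n : ℝ)) / (1 - t)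
    with hgdef
  set C : ℝ := ∫ t in Set.Ioo (0 : ℝ) 1, g t with hCdef
  have hcast2 : ((n - 2 : ℕ) : ℝ) = (n : ℝ) - 2 := by
    rw [Nat.cast_sub (by omega)]; norm_num
  -- Step 1: inner integral equals v ^ (n-1) * C
  have inner_eq : ∀ v ∈ Set.Ioo (0 : ℝ) 1,
      (∫ u in Set.Ioo (0 : ℝ) v,
        (v ^ (1 + 1 / (n : ℝ)) - u ^ (1 + 1 / (n : ℝ))) ^ (n - 2) *
            u ^ (1 / (n : ℝ)) * v ^ (1 / (n : ℝ)) / (v - u))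
      = v ^ (n - 1) * C := by
    intro v hv
    obtain ⟨hv0, hv1⟩ := hv
    have himg : (fun t : ℝ => v * t) '' Set.Ioo 0 1 = Set.Ioo (0 : ℝ) v := by
      rw [Set.image_mul_left_Ioo hv0]; simp
    rw [← himg, MeasureTheory.integral_image_eq_integral_abs_deriv_smul
        measurableSet_Ioo
        (fun x _ => by simpa using ((hasDerivAt_id x).const_mul v).hasDerivWithinAt)
        (fun x _ y _ h => mul_left_cancel₀ (ne_of_gt hv0) h)]
    rw [hCdef, ← MeasureTheory.integral_const_mul]
    apply MeasureTheory.setIntegral_congr_fun measurableSet_Ioo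
    intro t ht
    obtain ⟨ht0, ht1⟩ := ht
    simp only [smul_eq_mul, abs_of_pos hv0, hgdef]
    have hvt : (v * t) ^ (1 + 1 / (n : ℝ)) = v ^ (1 + 1 / (n : ℝ)) * t ^ (1 + 1 / (n : ℝ)) :=
      Real.mul_rpow hv0.le ht0.le
    have hvt' : (v * t) ^ (1 / (n : ℝ)) = v ^ (1 / (n : ℝ)) * t ^ (1 / (n : ℝ)) :=
      Real.mul_rpow hv0.le ht0.le
    rw [hvt, hvt']
    have h1 : v ^ (1 + 1 / (n : ℝ)) - v ^ (1 + 1 / (n : ℝ)) * t ^ (1 + 1 / (n : ℝ))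
        = v ^ (1 + 1 / (n : ℝ)) * (1 - t ^ (1 + 1 / (n : ℝ))) := by ring
    have h2 : v - v * t = v * (1 - t) := by ring
    rw [h1, h2, mul_pow]
    have hvpow : (v ^ (1 + 1 / (n : ℝ))) ^ (n - 2) = v ^ ((1 + 1 / (n : ℝ)) * ((n - 2 : ℕ) : ℝ)) := by
      rw [← Real.rpow_natCast (v ^ (1 + 1 / (n : ℝ))) (n - 2), ← Real.rpow_mul hv0.le]
    rw [hvpow]
    have hcollect : v * (v ^ ((1 + 1 / (n : ℝ)) * ((n - 2 : ℕ) : ℝ))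
        * v ^ (1 / (n : ℝ)) * v ^ (1 / (n : ℝ))) = v ^ (n : ℕ) := by
      rw [← Real.rpow_add hv0, ← Real.rpow_add hv0]
      nth_rewrite 1 [← Real.rpow_one v]
      rw [← Real.rpow_add hv0, ← Real.rpow_natCast v n]
      congr 1
      rw [hcast2]
      field_simp
      ring
    have hvn1 : v ^ (n : ℕ) = v ^ (n - 1) * v := by
      rw [← pow_succ]; congr 1; omega
    have hcv := hcollect.trans hvn1
    have hne : (1 : ℝ) - t ≠ 0 := by nlinarith
    have hnv : v ≠ 0 := ne_of_gt hv0
    rw [← mul_div_assoc, ← mul_div_assoc,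
      div_eq_div_iff (mul_ne_zero hnv hne) hne]
    linear_combination ((1 - t ^ (1 + 1 / (n : ℝ))) ^ (n - 2) * t ^ (1 / (n : ℝ)) * (1 - t)) * hcv
  rw [MeasureTheory.setIntegral_congr_fun measurableSet_Ioo inner_eq]
  -- Step 2: outer integral
  have houter : (∫ v in Set.Ioo (0 : ℝ) 1, v ^ (n - 1) * C) = (1 / (n : ℝ)) * C := by
    rw [MeasureTheory.integral_mul_const]
    congr 1
    rw [← MeasureTheory.integral_Ioc_eq_integral_Ioo,
      ← intervalIntegral.integral_of_le (by norm_num : (0:ℝ) ≤ 1),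
      integral_pow]
    have h' : n - 1 + 1 = n := by omega
    rw [h', zero_pow (by omega : n ≠ 0), Nat.cast_sub (by omega : 1 ≤ n)]
    push_cast
    field_simp
    simp [hn0]
  rw [houter]
  -- Step 3: substitution x ↦ x^n
  have himg : (fun x : ℝ => x ^ n) '' Set.Ioo 0 1 = Set.Ioo (0 : ℝ) 1 := by
    ext y
    constructor
    · rintro ⟨x, ⟨hx0, hx1⟩, rfl⟩
      exact ⟨pow_pos hx0 n, pow_lt_one₀ hx0.le hx1 (by omega)⟩
    · rintro ⟨hy0, hy1⟩
      refine ⟨y ^ (1 / (n : ℝ)), ⟨Real.rpow_pos_of_pos hy0 _, ?_⟩, ?_⟩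
      · exact Real.rpow_lt_one hy0.le hy1 (by positivity)
      · show (y ^ (1 / (n : ℝ))) ^ n = y
        rw [← Real.rpow_natCast (y ^ (1 / (n : ℝ))) n, ← Real.rpow_mul hy0.le]
        field_simp
        simp
  have hsub := MeasureTheory.integral_image_eq_integral_abs_deriv_smul
      (s := Set.Ioo (0 : ℝ) 1) measurableSet_Ioo
      (fun x _ => (hasDerivAt_pow n x).hasDerivWithinAt)
      (fun x hx y hy h => by
        have := pow_left_strictMonoOn₀ (M₀ := ℝ) (by omega : n ≠ 0)
        exact this.injOn hx.1.le hy.1.le h) g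
  rw [himg] at hsub
  have hC : C = (n : ℝ) * ∫ x in Set.Ioo (0 : ℝ) 1,
      x ^ n * (1 - x ^ (n + 1)) ^ (n - 2) / (1 - x ^ n) := by
    rw [hCdef, hsub, ← MeasureTheory.integral_const_mul]
    apply MeasureTheory.setIntegral_congr_fun measurableSet_Ioo
    intro x hx
    obtain ⟨hx0, hx1⟩ := hx
    simp only [smul_eq_mul, hgdef]
    have hd : |(n : ℝ) * x ^ (n - 1)| = (n : ℝ) * x ^ (n - 1) := by
      apply abs_of_pos; positivity
    have hp1 : (x ^ n : ℝ) ^ (1 + 1 / (n : ℝ)) = x ^ (n + 1) := by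
      rw [← Real.rpow_natCast x n, ← Real.rpow_mul hx0.le, ← Real.rpow_natCast x (n + 1)]
      congr 1
      field_simp
      push_cast
      ring
    have hp2 : (x ^ n : ℝ) ^ (1 / (n : ℝ)) = x := by
      rw [← Real.rpow_natCast x n, ← Real.rpow_mul hx0.le]
      field_simp
      simp
    rw [hd, hp1, hp2]
    have hxn : x ^ (n - 1) * x = x ^ n := by
      rw [← pow_succ]; congr 1; omega
    have hne : (1 : ℝ) - x ^ n ≠ 0 := by
      have : x ^ n < 1 := pow_lt_one₀ hx0.le hx1 (by omega)
      linarith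
    rw [← mul_div_assoc, ← mul_div_assoc, div_eq_div_iff hne hne]
    linear_combination ((n : ℝ) * (1 - x ^ (n + 1)) ^ (n - 2) * (1 - x ^ n)) * hxn
  rw [hC]
  field_simp
end

section
/- Let n ≥ 2, let 0 ≤ u < v ≤ 1, let a : 2^{{1,…,n}} → ℝ with a(∅) = 0, let C_a(x) = Σ_{S ⊆ {1,…,n}} a(S) min_{i ∈ S} x_i, and let j ≠ k in {1,…,n}. Then ∫_{(u,v)^{n−2}} C_a(x | x_j = u, x_k = v) ∏_{i ∉ {j,k}} dx_i = (v−u)^{n−2} ( Σ_{S ∋ j} a(S) u + Σ_{S ∌ j, S ∋ k} a(S) (u(|S|−1) + v)/|S| + Σ_{S ∌ j, S ∌ k} a(S) (u|S| + v)/(|S|+1) ), where in the last sum only nonempty S are counted. -/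
open MeasureTheory

lemma continuous_finset_inf' {ι X : Type*} [TopologicalSpace X] {T : Finset ι} (hT : T.Nonempty)
    (f : ι → X → ℝ) (hf : ∀ i, Continuous (f i)) :
    Continuous fun x : X => T.inf' hT fun i => f i x := by
  induction hT using Finset.Nonempty.cons_induction with
  | singleton i => simp only [Finset.inf'_singleton]; exact hf i
  | cons i s hi hs ih =>
      simp only [Finset.inf'_cons (H := hs)]
      exact (hf i).min ih

lemma box_measurable {ι : Type*} [Fintype ι] (u v : ℝ) :
    MeasurableSet (Set.univ.pi fun _ : ι => Set.Ioo u v) :=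
  MeasurableSet.univ_pi fun _ => measurableSet_Ioo

lemma box_volume {ι : Type*} [Fintype ι] (u v : ℝ) :
    (Measure.pi fun _ : ι => (volume : Measure ℝ)) (Set.univ.pi fun _ : ι => Set.Ioo u v)
      = ENNReal.ofReal (v - u) ^ Fintype.card ι := by
  rw [Measure.pi_pi]
  simp [Real.volume_Ioo, Finset.card_univ]

lemma integral_indicator_lt (u v m : ℝ) (hum : u ≤ m) (hmv : m ≤ v) :
    (∫ t in Set.Ioo u v, if t < m then (1:ℝ) else 0) = m - u := by
  have h : (fun t => if t < m then (1:ℝ) else 0) = (Set.Iio m).indicator (fun _ => 1) := by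
    ext t; simp [Set.indicator_apply, Set.mem_Iio]
  rw [h, MeasureTheory.setIntegral_indicator measurableSet_Iio, Set.Ioo_inter_Iio,
    min_eq_right hmv]
  simp [Real.volume_Ioo, ENNReal.toReal_ofReal (by linarith : (0:ℝ) ≤ m - u), hum]

lemma integral_box_inf' {ι : Type*} [Fintype ι] {u v : ℝ} (huv : u < v)
    (T : Finset ι) (hT : T.Nonempty) :
    (∫ y in Set.univ.pi fun _ : ι => Set.Ioo u v, T.inf' hT fun i => y i
        ∂(Measure.pi fun _ => (volume : Measure ℝ)))
      = (v - u) ^ (Fintype.card ι) * (u + (v - u) / (T.card + 1)) := by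
  classical
  set N := Fintype.card ι with hN
  set μ : Measure (ι → ℝ) := Measure.pi fun _ => volume with hμ
  set B : Set (ι → ℝ) := Set.univ.pi fun _ : ι => Set.Ioo u v with hBdef
  have hBm : MeasurableSet B := box_measurable u v
  have hBvol : μ B = ENNReal.ofReal (v - u) ^ N := box_volume u v
  have hvu : (0:ℝ) ≤ v - u := by linarith
  haveI : IsFiniteMeasure (μ.restrict B) := by
    constructor
    rw [Measure.restrict_apply_univ, hBvol]
    exact ENNReal.pow_lt_top ENNReal.ofReal_lt_top
  haveI : IsFiniteMeasure (volume.restrict (Set.Ioo u v)) := by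
    constructor
    rw [Measure.restrict_apply_univ, Real.volume_Ioo]
    exact ENNReal.ofReal_lt_top
  -- pointwise layer-cake identity on the box
  have hpt : ∀ y ∈ B, (T.inf' hT fun i => y i)
      = u + ∫ t in Set.Ioo u v, if t < T.inf' hT fun i => y i then (1:ℝ) else 0 := by
    intro y hy
    have h1 : ∀ i ∈ T, y i ∈ Set.Ioo u v := fun i _ => hy i (Set.mem_univ i)
    have hm1 : u ≤ T.inf' hT fun i => y i :=
      Finset.le_inf' hT _ fun i hi => (h1 i hi).1.le
    have hm2 : (T.inf' hT fun i => y i) ≤ v := by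
      obtain ⟨i, hi⟩ := hT
      exact le_trans (Finset.inf'_le _ hi) (h1 i hi).2.le
    rw [integral_indicator_lt u v _ hm1 hm2]; ring
  rw [MeasureTheory.setIntegral_congr_fun hBm hpt]
  -- measurability of the two-variable indicator
  have hcont : Continuous fun y : ι → ℝ => T.inf' hT fun i => y i :=
    continuous_finset_inf' hT _ fun i => continuous_apply i
  have hsetm : MeasurableSet {p : (ι → ℝ) × ℝ | p.2 < T.inf' hT fun i => p.1 i} :=
    measurableSet_lt measurable_snd (hcont.measurable.comp measurable_fst)
  have hFmeas : Measurable fun p : (ι → ℝ) × ℝ =>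
      if p.2 < T.inf' hT fun i => p.1 i then (1:ℝ) else 0 :=
    Measurable.ite hsetm measurable_const measurable_const
  have hFint : Integrable
      (Function.uncurry fun (y : ι → ℝ) (t : ℝ) =>
        if t < T.inf' hT fun i => y i then (1:ℝ) else 0)
      ((μ.restrict B).prod (volume.restrict (Set.Ioo u v))) := by
    refine (integrable_const (1:ℝ)).mono' hFmeas.aestronglyMeasurable ?_
    filter_upwards with p
    by_cases h : p.2 < T.inf' hT fun i => p.1 i <;> simp [Function.uncurry, h]
  have hswap := MeasureTheory.integral_integral_swap hFint
  -- split the integral of the sum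
  have h2' : Integrable (fun x : ι → ℝ =>
      ∫ t in Set.Ioo u v, if t < T.inf' hT fun i => x i then (1:ℝ) else 0) (μ.restrict B) :=
    hFint.integral_prod_left
  rw [MeasureTheory.integral_add (integrable_const u) h2', MeasureTheory.integral_const, hswap]
  -- inner integral evaluation
  set m := T.card with hm
  have hmN : m ≤ N := by rw [hm, hN, ← Finset.card_univ]; exact Finset.card_le_univ T
  have hinner : ∀ t ∈ Set.Ioo u v,
      (∫ y, (if t < T.inf' hT fun i => y i then (1:ℝ) else 0) ∂(μ.restrict B))
        = (v - t) ^ m * (v - u) ^ (N - m) := by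
    intro t ht
    have hs : MeasurableSet {y : ι → ℝ | t < T.inf' hT fun i => y i} :=
      measurableSet_lt measurable_const hcont.measurable
    have hind : (fun y : ι → ℝ => if t < T.inf' hT fun i => y i then (1:ℝ) else 0)
        = Set.indicator {y : ι → ℝ | t < T.inf' hT fun i => y i} (fun _ => 1) := by
      ext y; simp [Set.indicator_apply]
    rw [hind, MeasureTheory.integral_indicator_const (1:ℝ) hs, measureReal_def, Measure.restrict_apply hs]
    have hseteq : {y : ι → ℝ | t < T.inf' hT fun i => y i} ∩ B
        = Set.univ.pi fun i => if i ∈ T then Set.Ioo t v else Set.Ioo u v := by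
      ext y
      simp only [Set.mem_inter_iff, Set.mem_setOf_eq, hBdef, Set.mem_pi, Set.mem_univ,
        forall_true_left, Finset.lt_inf'_iff, Set.mem_Ioo]
      constructor
      · rintro ⟨h1a, h2a⟩ i
        by_cases hiT : i ∈ T
        · simp only [hiT, if_true]
          exact ⟨h1a i hiT, (h2a i).2⟩
        · simp only [hiT, if_false]
          exact h2a i
      · intro h
        constructor
        · intro i hi
          have := h i; rw [if_pos hi] at this; exact this.1
        · intro i
          by_cases hiT : i ∈ T
          · have := h i; rw [if_pos hiT] at this
            exact ⟨lt_trans ht.1 this.1, this.2⟩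
          · have := h i; rw [if_neg hiT] at this; exact this
    rw [hseteq, hμ, Measure.pi_pi]
    have h1 : Finset.univ.filter (fun i => i ∈ T) = T := by ext; simp
    have h2 : (Finset.univ.filter (fun i => ¬ i ∈ T)).card = N - m := by
      rw [Finset.filter_not, h1, Finset.card_sdiff_of_subset (Finset.subset_univ T), Finset.card_univ]
    have hprod : (∏ i : ι, volume (if i ∈ T then Set.Ioo t v else Set.Ioo u v))
        = ENNReal.ofReal (v - t) ^ m * ENNReal.ofReal (v - u) ^ (N - m) := by
      simp only [apply_ite volume, Real.volume_Ioo]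
      rw [Finset.prod_ite, Finset.prod_const, Finset.prod_const, h1, h2]
    rw [hprod, smul_eq_mul, mul_one, ENNReal.toReal_mul, ENNReal.toReal_pow,
      ENNReal.toReal_pow, ENNReal.toReal_ofReal (by linarith [ht.2] : (0:ℝ) ≤ v - t),
      ENNReal.toReal_ofReal hvu]
  rw [MeasureTheory.setIntegral_congr_fun measurableSet_Ioo hinner]
  -- compute outer one-dimensional integral
  have houter : (∫ t in Set.Ioo u v, (v - t) ^ m * (v - u) ^ (N - m))
      = ((v - u) ^ (m + 1) / (m + 1)) * (v - u) ^ (N - m) := by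
    rw [MeasureTheory.integral_mul_const]
    congr 1
    rw [← MeasureTheory.integral_Ioc_eq_integral_Ioo, ← intervalIntegral.integral_of_le huv.le]
    rw [intervalIntegral.integral_comp_sub_left (fun s => s ^ m) v, sub_self, integral_pow,
      zero_pow (Nat.succ_ne_zero m)]
    push_cast
    ring
  rw [houter, smul_eq_mul]
  have hμB : (μ B).toReal = (v - u) ^ N := by
    rw [hBvol, ENNReal.toReal_pow, ENNReal.toReal_ofReal hvu]
  have hpow : (v - u) ^ (m + 1) * (v - u) ^ (N - m) = (v - u) ^ N * (v - u) := by
    rw [← pow_add]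
    have hadd : m + 1 + (N - m) = N + 1 := by omega
    rw [hadd, pow_succ]
  rw [measureReal_def, Measure.restrict_apply_univ, hμB, mul_add, div_mul_eq_mul_div, hpow, mul_div_assoc]

/-- The discrete Choquet integral (Lovász extension) associated with a set function
`a : 2^{[n]} → ℝ`: `C_a(x) = Σ_{S ⊆ [n]} a(S) min_{i ∈ S} x_i`, with the convention that
the term for `S = ∅` contributes `0`. -/
noncomputable def choquet {n : ℕ} (a : Finset (Fin n) → ℝ) (x : Fin n → ℝ) : ℝ :=
  ∑ S : Finset (Fin n), a S * (if h : S.Nonempty then S.inf' h x else 0)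

/-- For `n ≥ 2`, `0 ≤ u < v ≤ 1`, a set function `a` with `a(∅) = 0`, and `j ≠ k`,
`∫_{]u,v[^{n−2}} C_a(x | x_j = u, x_k = v) ∏_{i ∉ {j,k}} dx_i
  = (v−u)^{n−2} ( Σ_{S ∋ j} a(S) u + Σ_{S ∌ j, S ∋ k} a(S)(u(|S|−1)+v)/|S|
      + Σ_{S ∌ j, S ∌ k, S ≠ ∅} a(S)(u|S|+v)/(|S|+1) )`. -/
theorem integral_choquet_box (n : ℕ) (hn : 2 ≤ n) (u v : ℝ)
    (hu : 0 ≤ u) (huv : u < v) (hv : v ≤ 1)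
    (a : Finset (Fin n) → ℝ) (ha0 : a ∅ = 0) (j k : Fin n) (hjk : j ≠ k) :
    (∫ y in Set.univ.pi fun _ : {i : Fin n // i ≠ j ∧ i ≠ k} => Set.Ioo u v,
        choquet a fun i => if h : i = j then u else if h' : i = k then v else y ⟨i, h, h'⟩)
      = (v - u) ^ (n - 2) *
          ((∑ S ∈ Finset.univ.filter fun S : Finset (Fin n) => j ∈ S, a S * u) +
            (∑ S ∈ Finset.univ.filter fun S : Finset (Fin n) => j ∉ S ∧ k ∈ S,
              a S * ((u * ((S.card : ℝ) - 1) + v) / (S.card : ℝ))) +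
            ∑ S ∈ Finset.univ.filter fun S : Finset (Fin n) => j ∉ S ∧ k ∉ S ∧ S.Nonempty,
              a S * ((u * (S.card : ℝ) + v) / ((S.card : ℝ) + 1))) := by
  classical
  have hkj : k ≠ j := hjk.symm
  have hvu : (0:ℝ) ≤ v - u := by linarith
  set ι := {i : Fin n // i ≠ j ∧ i ≠ k} with hι
  set B : Set (ι → ℝ) := Set.univ.pi fun _ : ι => Set.Ioo u v with hBdef
  have hBm : MeasurableSet B := box_measurable u v
  have hcard : Fintype.card ι = n - 2 := by
    have h1 : (Finset.univ.filter fun i : Fin n => i ≠ j ∧ i ≠ k) = Finset.univ \ {j, k} := by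
      ext i
      simp [not_or]
    have h2 : Fintype.card {i : Fin n // i ≠ j ∧ i ≠ k} = n - 2 := by
      rw [Fintype.card_subtype, h1, Finset.card_sdiff_of_subset (Finset.subset_univ _),
        Finset.card_univ, Fintype.card_fin, Finset.card_pair hjk]
    exact h2
  have hvolB : (volume : Measure (ι → ℝ)) B = ENNReal.ofReal (v - u) ^ (n - 2) := by
    rw [MeasureTheory.volume_pi, hBdef, box_volume, hcard]
  have hμB : ((volume : Measure (ι → ℝ)) B).toReal = (v - u) ^ (n - 2) := by
    rw [hvolB, ENNReal.toReal_pow, ENNReal.toReal_ofReal hvu]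
  haveI : IsFiniteMeasure ((volume : Measure (ι → ℝ)).restrict B) := by
    constructor
    rw [Measure.restrict_apply_univ, hvolB]
    exact ENNReal.pow_lt_top ENNReal.ofReal_lt_top
  -- pointwise range of the modified coordinates
  have hptIcc : ∀ y ∈ B, ∀ i : Fin n,
      (if h : i = j then u else if h' : i = k then v else y ⟨i, h, h'⟩) ∈ Set.Icc u v := by
    intro y hy i
    by_cases h2 : i = j
    · rw [dif_pos h2]; exact ⟨le_rfl, huv.le⟩
    by_cases h3 : i = k
    · rw [dif_neg h2, dif_pos h3]; exact ⟨huv.le, le_rfl⟩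
    · rw [dif_neg h2, dif_neg h3]
      have := hy ⟨i, h2, h3⟩ (Set.mem_univ _)
      exact ⟨this.1.le, this.2.le⟩
  -- integrability of each summand
  have hints : ∀ S ∈ (Finset.univ : Finset (Finset (Fin n))),
      Integrable (fun y : ι → ℝ => a S * (if h : S.Nonempty then
        S.inf' h (fun i => if h2 : i = j then u else if h3 : i = k then v else y ⟨i, h2, h3⟩)
        else 0)) (volume.restrict B) := by
    intro S _
    by_cases hS : S.Nonempty
    · simp only [dif_pos hS]
      refine Integrable.const_mul ?_ (a S)
      have hc : Continuous fun y : ι → ℝ => S.inf' hS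
          (fun i => if h2 : i = j then u else if h3 : i = k then v else y ⟨i, h2, h3⟩) := by
        apply continuous_finset_inf' hS
          (f := fun (i : Fin n) (y : ι → ℝ) =>
            if h2 : i = j then u else if h3 : i = k then v else y ⟨i, h2, h3⟩)
        intro i
        by_cases h2 : i = j
        · simp only [dif_pos h2]; exact continuous_const
        by_cases h3 : i = k
        · simp only [dif_neg h2, dif_pos h3]; exact continuous_const
        · simp only [dif_neg h2, dif_neg h3]; exact continuous_apply _
      refine (integrable_const (1:ℝ)).mono' hc.aestronglyMeasurable ?_
      filter_upwards [MeasureTheory.ae_restrict_mem hBm] with y hy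
      have h1 : u ≤ S.inf' hS
          (fun i => if h2 : i = j then u else if h3 : i = k then v else y ⟨i, h2, h3⟩) :=
        Finset.le_inf' hS _ fun i _ => (hptIcc y hy i).1
      have h2 : S.inf' hS
          (fun i => if h2 : i = j then u else if h3 : i = k then v else y ⟨i, h2, h3⟩) ≤ v := by
        obtain ⟨i0, hi0⟩ := hS
        exact le_trans (Finset.inf'_le _ hi0) (hptIcc y hy i0).2
      rw [Real.norm_eq_abs, abs_le]
      constructor <;> linarith
    · simp only [dif_neg hS, mul_zero]
      exact integrable_zero _ _ _
  simp only [choquet]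
  rw [MeasureTheory.integral_finset_sum _ hints]
  have hval : ∀ S : Finset (Fin n),
      (∫ y in B, a S * (if h : S.Nonempty then
          S.inf' h (fun i => if h2 : i = j then u else if h3 : i = k then v else y ⟨i, h2, h3⟩)
          else 0))
        = (v - u) ^ (n - 2) * (a S *
            (if j ∈ S then u
             else if k ∈ S then (u * ((S.card : ℝ) - 1) + v) / (S.card : ℝ)
             else if S.Nonempty then (u * (S.card : ℝ) + v) / ((S.card : ℝ) + 1) else 0)) := by
    intro S
    by_cases hjS : j ∈ S
    · have hS : S.Nonempty := ⟨j, hjS⟩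
      simp only [dif_pos hS, if_pos hjS]
      rw [MeasureTheory.integral_const_mul]
      have hEq : Set.EqOn (fun y : ι → ℝ => S.inf' hS
          (fun i => if h2 : i = j then u else if h3 : i = k then v else y ⟨i, h2, h3⟩))
          (fun _ => u) B := by
        intro y hy
        refine le_antisymm ?_ (Finset.le_inf' hS _ fun i _ => (hptIcc y hy i).1)
        have := Finset.inf'_le
          (fun i => if h2 : i = j then u else if h3 : i = k then v else y ⟨i, h2, h3⟩) hjS
        exact this.trans (by simp)
      rw [MeasureTheory.setIntegral_congr_fun hBm hEq, MeasureTheory.setIntegral_const, measureReal_def, hμB,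
        smul_eq_mul]
      ring
    by_cases hkS : k ∈ S
    · have hS : S.Nonempty := ⟨k, hkS⟩
      simp only [dif_pos hS, if_neg hjS, if_pos hkS]
      rw [MeasureTheory.integral_const_mul]
      by_cases hE : (S.erase k).Nonempty
      · set T : Finset ι := (S.erase k).subtype (fun i => i ≠ j ∧ i ≠ k) with hTdef
        obtain ⟨i0, hi0⟩ := hE
        have hi0S : i0 ∈ S := Finset.mem_of_mem_erase hi0
        have hi0k : i0 ≠ k := Finset.ne_of_mem_erase hi0
        have hi0j : i0 ≠ j := fun h => hjS (h ▸ hi0S)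
        have hi0T : (⟨i0, hi0j, hi0k⟩ : ι) ∈ T := by
          rw [hTdef, Finset.mem_subtype]; exact hi0
        have hT : T.Nonempty := ⟨⟨i0, hi0j, hi0k⟩, hi0T⟩
        have hTcard : T.card = S.card - 1 := by
          rw [hTdef, Finset.card_subtype, Finset.filter_true_of_mem, Finset.card_erase_of_mem hkS]
          intro i hi
          have hiS := Finset.mem_of_mem_erase hi
          exact ⟨fun h => hjS (h ▸ hiS), Finset.ne_of_mem_erase hi⟩
        have hEq : Set.EqOn (fun y : ι → ℝ => S.inf' hS
            (fun i => if h2 : i = j then u else if h3 : i = k then v else y ⟨i, h2, h3⟩))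
            (fun y => T.inf' hT fun i => y i) B := by
          intro y hy
          apply le_antisymm
          · apply Finset.le_inf' hT
            rintro ⟨i, hij, hik⟩ hiT
            have hiS : i ∈ S := Finset.mem_of_mem_erase (Finset.mem_subtype.mp hiT)
            have := Finset.inf'_le
              (fun i => if h2 : i = j then u else if h3 : i = k then v else y ⟨i, h2, h3⟩) hiS
            exact this.trans (by simp [dif_neg hij, dif_neg hik])
          · apply Finset.le_inf' hS
            intro i hiS
            by_cases h3 : i = k
            · rw [dif_neg (fun h : i = j => hjS (h ▸ hiS)), dif_pos h3]
              have hle := Finset.inf'_le (fun i : ι => y i) hi0T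
              exact le_trans hle (hy ⟨i0, hi0j, hi0k⟩ (Set.mem_univ _)).2.le
            · have h2 : i ≠ j := fun h => hjS (h ▸ hiS)
              rw [dif_neg h2, dif_neg h3]
              exact Finset.inf'_le _ (Finset.mem_subtype.mpr (Finset.mem_erase.mpr ⟨h3, hiS⟩))
        rw [MeasureTheory.setIntegral_congr_fun hBm hEq]
        rw [show (volume : Measure (ι → ℝ)) = Measure.pi fun _ => volume from rfl]
        rw [integral_box_inf' huv T hT, hcard, hTcard]
        have hc1 : 1 ≤ S.card := Finset.one_le_card.mpr hS
        have hcast : ((S.card - 1 : ℕ) : ℝ) = (S.card : ℝ) - 1 := by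
          push_cast [hc1]; ring
        rw [hcast]
        have hc0 : (S.card : ℝ) ≠ 0 := Nat.cast_ne_zero.mpr (by omega)
        field_simp
        rw [sub_add_cancel]; field_simp
        ring
      · have hSk : S = {k} := by
          have h0 : S.erase k = ∅ := Finset.not_nonempty_iff_eq_empty.mp hE
          apply Finset.eq_singleton_iff_unique_mem.mpr
          refine ⟨hkS, fun x hx => ?_⟩
          by_contra hxk
          exact (Finset.notMem_empty x) (h0 ▸ Finset.mem_erase.mpr ⟨hxk, hx⟩)
        subst hSk
        have hEq : Set.EqOn (fun y : ι → ℝ => ({k} : Finset (Fin n)).inf' hS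
            (fun i => if h2 : i = j then u else if h3 : i = k then v else y ⟨i, h2, h3⟩))
            (fun _ => v) B := by
          intro y hy
          simp only [Finset.inf'_singleton, dif_neg hkj]
          simp
        rw [MeasureTheory.setIntegral_congr_fun hBm hEq, MeasureTheory.setIntegral_const, measureReal_def, hμB,
          smul_eq_mul, Finset.card_singleton]
        norm_num
        ring
    by_cases hS : S.Nonempty
    · simp only [dif_pos hS, if_neg hjS, if_neg hkS, if_pos hS]
      rw [MeasureTheory.integral_const_mul]
      set T : Finset ι := S.subtype (fun i => i ≠ j ∧ i ≠ k) with hTdef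
      obtain ⟨i0, hi0S⟩ := hS
      have hi0k : i0 ≠ k := fun h => hkS (h ▸ hi0S)
      have hi0j : i0 ≠ j := fun h => hjS (h ▸ hi0S)
      have hi0T : (⟨i0, hi0j, hi0k⟩ : ι) ∈ T := by
        rw [hTdef, Finset.mem_subtype]; exact hi0S
      have hT : T.Nonempty := ⟨⟨i0, hi0j, hi0k⟩, hi0T⟩
      have hTcard : T.card = S.card := by
        rw [hTdef, Finset.card_subtype, Finset.filter_true_of_mem]
        intro i hiS
        exact ⟨fun h => hjS (h ▸ hiS), fun h => hkS (h ▸ hiS)⟩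
      have hS' : S.Nonempty := ⟨i0, hi0S⟩
      have hEq : Set.EqOn (fun y : ι → ℝ => S.inf' hS'
          (fun i => if h2 : i = j then u else if h3 : i = k then v else y ⟨i, h2, h3⟩))
          (fun y => T.inf' hT fun i => y i) B := by
        intro y hy
        apply le_antisymm
        · apply Finset.le_inf' hT
          rintro ⟨i, hij, hik⟩ hiT
          have hiS : i ∈ S := Finset.mem_subtype.mp hiT
          have := Finset.inf'_le
            (fun i => if h2 : i = j then u else if h3 : i = k then v else y ⟨i, h2, h3⟩) hiS
          exact this.trans (by simp [dif_neg hij, dif_neg hik])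
        · apply Finset.le_inf' hS'
          intro i hiS
          have h2 : i ≠ j := fun h => hjS (h ▸ hiS)
          have h3 : i ≠ k := fun h => hkS (h ▸ hiS)
          rw [dif_neg h2, dif_neg h3]
          exact Finset.inf'_le _ (Finset.mem_subtype.mpr hiS)
      rw [MeasureTheory.setIntegral_congr_fun hBm hEq]
      rw [show (volume : Measure (ι → ℝ)) = Measure.pi fun _ => volume from rfl]
      rw [integral_box_inf' huv T hT, hcard, hTcard]
      have hc0 : (S.card : ℝ) + 1 ≠ 0 := by positivity
      field_simp
      ring
    · simp only [dif_neg hS, if_neg hjS, if_neg hkS, if_neg hS, mul_zero, integral_zero]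
  rw [Finset.sum_congr rfl fun S _ => hval S, ← Finset.mul_sum]
  congr 1
  rw [← Finset.sum_filter_add_sum_filter_not Finset.univ (fun S => j ∈ S)]
  rw [← Finset.sum_filter_add_sum_filter_not (Finset.univ.filter fun S => ¬ j ∈ S)
    (fun S => k ∈ S), Finset.filter_filter, Finset.filter_filter]
  rw [← Finset.sum_filter_add_sum_filter_not
    (Finset.univ.filter fun S : Finset (Fin n) => ¬ j ∈ S ∧ ¬ k ∈ S)
    (fun S => S.Nonempty), Finset.filter_filter, Finset.filter_filter]
  have e1 : ∑ S ∈ Finset.univ.filter (fun S : Finset (Fin n) => j ∈ S),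
      a S * (if j ∈ S then u
             else if k ∈ S then (u * ((S.card : ℝ) - 1) + v) / (S.card : ℝ)
             else if S.Nonempty then (u * (S.card : ℝ) + v) / ((S.card : ℝ) + 1) else 0)
      = ∑ S ∈ Finset.univ.filter (fun S : Finset (Fin n) => j ∈ S), a S * u := by
    apply Finset.sum_congr rfl
    intro S hSm
    rw [Finset.mem_filter] at hSm
    rw [if_pos hSm.2]
  have e2 : ∑ S ∈ Finset.univ.filter (fun S : Finset (Fin n) => ¬ j ∈ S ∧ k ∈ S),
      a S * (if j ∈ S then u
             else if k ∈ S then (u * ((S.card : ℝ) - 1) + v) / (S.card : ℝ)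
             else if S.Nonempty then (u * (S.card : ℝ) + v) / ((S.card : ℝ) + 1) else 0)
      = ∑ S ∈ Finset.univ.filter (fun S : Finset (Fin n) => j ∉ S ∧ k ∈ S),
          a S * ((u * ((S.card : ℝ) - 1) + v) / (S.card : ℝ)) := by
    apply Finset.sum_congr rfl
    intro S hSm
    rw [Finset.mem_filter] at hSm
    rw [if_neg hSm.2.1, if_pos hSm.2.2]
  have e3 : ∑ S ∈ Finset.univ.filter (fun S : Finset (Fin n) => (¬ j ∈ S ∧ ¬ k ∈ S) ∧ S.Nonempty),
      a S * (if j ∈ S then u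
             else if k ∈ S then (u * ((S.card : ℝ) - 1) + v) / (S.card : ℝ)
             else if S.Nonempty then (u * (S.card : ℝ) + v) / ((S.card : ℝ) + 1) else 0)
      = ∑ S ∈ Finset.univ.filter (fun S : Finset (Fin n) => j ∉ S ∧ k ∉ S ∧ S.Nonempty),
          a S * ((u * (S.card : ℝ) + v) / ((S.card : ℝ) + 1)) := by
    rw [show (Finset.univ.filter fun S : Finset (Fin n) => (¬ j ∈ S ∧ ¬ k ∈ S) ∧ S.Nonempty)
        = Finset.univ.filter (fun S : Finset (Fin n) => j ∉ S ∧ k ∉ S ∧ S.Nonempty) from by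
      ext S; simp [and_assoc]]
    apply Finset.sum_congr rfl
    intro S hSm
    rw [Finset.mem_filter] at hSm
    rw [if_neg hSm.2.1, if_neg hSm.2.2.1, if_pos hSm.2.2.2]
  have e4 : ∑ S ∈ Finset.univ.filter
        (fun S : Finset (Fin n) => (¬ j ∈ S ∧ ¬ k ∈ S) ∧ ¬ S.Nonempty),
      a S * (if j ∈ S then u
             else if k ∈ S then (u * ((S.card : ℝ) - 1) + v) / (S.card : ℝ)
             else if S.Nonempty then (u * (S.card : ℝ) + v) / ((S.card : ℝ) + 1) else 0)
      = 0 := by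
    apply Finset.sum_eq_zero
    intro S hSm
    rw [Finset.mem_filter] at hSm
    rw [if_neg hSm.2.1.1, if_neg hSm.2.1.2, if_neg hSm.2.2, mul_zero]
  rw [e1, e2, e3, e4, add_zero]
  ring
end

section
/- Let n ≥ 1 and let P(x) = ∏_{i=1}^n x_i on (0,1)^n. Then the idempotency average value of P over [0,1]^n equals 2^{n−1} / binom(2n−1, n), i.e., ∫_{(0,1)^n} (∏_{i=1}^n x_i)/(min_i x_i) dx = 2^{n−1} / binom(2n−1, n). -/
open MeasureTheory Set

set_option maxHeartbeats 1000000

lemma aux_choose (m : ℕ) :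
    ((m : ℝ) + 1) * (Nat.choose (2*m+1) (m+1)) *
      ∏ i ∈ Finset.range m, (2*(i:ℝ)+2)/(2*(i:ℝ)+3) = 4 ^ m := by
  induction m with
  | zero => simp
  | succ k ih =>
    rw [show 2*(k+1)+1 = 2*k+3 from by ring, show k+1+1 = k+2 from by omega]
    have hs : Nat.choose (2*k+1) (k+1) = Nat.choose (2*k+1) k := by
      have := Nat.choose_symm (n := 2*k+1) (k := k+1) (by omega)
      simpa [show 2*k+1 - (k+1) = k by omega] using this.symm
    have hp : Nat.choose (2*k+1+1) (k+1) = Nat.choose (2*k+1) k + Nat.choose (2*k+1) (k+1) := by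
      simpa [Nat.succ_eq_add_one] using Nat.choose_succ_succ (2*k+1) k
    have h1 : (2*k+1+1+1) * Nat.choose (2*k+1+1) (k+1) = Nat.choose (2*k+1+1+1) (k+1+1) * (k+1+1) := by
      simpa [Nat.succ_eq_add_one] using Nat.add_one_mul_choose_eq (2*k+1+1) (k+1)
    rw [show 2*k+1+1+1 = 2*k+3 from by ring, show 2*k+1+1 = 2*k+2 from by ring,
      show k+1+1 = k+2 from by omega] at h1
    rw [show 2*k+1+1 = 2*k+2 from by ring] at hp
    have h2 : Nat.choose (2*k+2) (k+1) = 2 * Nat.choose (2*k+1) (k+1) := by omega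
    rw [h2] at h1
    have hnat : Nat.choose (2*k+3) (k+2) * (k+2) = (2*k+3) * (2 * Nat.choose (2*k+1) (k+1)) := by
      rw [← h1]
    have hcast : ((Nat.choose (2*k+3) (k+2) : ℝ)) * ((k:ℝ)+2)
        = (2*(k:ℝ)+3) * (2 * (Nat.choose (2*k+1) (k+1) : ℝ)) := by
      exact_mod_cast congrArg (Nat.cast (R := ℝ)) hnat
    rw [Finset.prod_range_succ]
    push_cast
    have h23 : (2*(k:ℝ)+3) ≠ 0 := by positivity
    set C : ℝ := (Nat.choose (2*k+1) (k+1) : ℝ)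
    set C' : ℝ := (Nat.choose (2*k+3) (k+2) : ℝ)
    set P : ℝ := ∏ i ∈ Finset.range k, (2*(i:ℝ)+2)/(2*(i:ℝ)+3)
    have key : ((k:ℝ)+1+1) * C' * (P * ((2*(k:ℝ)+2) / (2*(k:ℝ)+3)))
        = ((C' * ((k:ℝ)+2)) * (2*(k:ℝ)+3)⁻¹) * ((2*(k:ℝ)+2) * P) := by
      rw [div_eq_mul_inv]; ring
    rw [key, hcast]
    have hred : (2*(k:ℝ)+3) * (2*C) * (2*(k:ℝ)+3)⁻¹ = 2*C := by
      field_simp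
    rw [hred]
    linear_combination (4 : ℝ) * ih

open intervalIntegral in
lemma aux_J (m : ℕ) : (∫ t in (0:ℝ)..1, (1 - t^2)^m)
    = ∏ i ∈ Finset.range m, (2*(i:ℝ)+2)/(2*(i:ℝ)+3) := by
  have hcont : Continuous fun u : ℝ => (1 - u^2)^m := (continuous_const.sub (continuous_pow 2)).pow m
  have hsub : (∫ x in (0:ℝ)..Real.pi, (fun x => -Real.sin x) x • ((fun u : ℝ => (1 - u^2)^m) ∘ Real.cos) x)
      = ∫ u in (Real.cos 0)..(Real.cos Real.pi), (1 - u^2)^m :=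
    intervalIntegral.integral_comp_smul_deriv (f := Real.cos) (f' := fun x => -Real.sin x)
      (g := fun u : ℝ => (1 - u^2)^m)
      (fun x _ => Real.hasDerivAt_cos x) Real.continuous_sin.neg.continuousOn hcont
  have hL : (∫ x in (0:ℝ)..Real.pi, (fun x => -Real.sin x) x • ((fun u : ℝ => (1 - u^2)^m) ∘ Real.cos) x)
      = -(∫ x in (0:ℝ)..Real.pi, Real.sin x ^ (2*m+1)) := by
    rw [← intervalIntegral.integral_neg]
    apply intervalIntegral.integral_congr
    intro x _
    simp only [Function.comp_apply, smul_eq_mul, ← Real.sin_sq, ← pow_mul]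
    ring
  have hR : (∫ u in (Real.cos 0)..(Real.cos Real.pi), (1 - u^2)^m)
      = -(∫ u in (-1:ℝ)..1, (1 - u^2)^m) := by
    rw [Real.cos_zero, Real.cos_pi, intervalIntegral.integral_symm]
  have hsym : (∫ u in (-1:ℝ)..0, (1 - u^2)^m) = ∫ u in (0:ℝ)..1, (1 - u^2)^m := by
    have := intervalIntegral.integral_comp_neg (a := (0:ℝ)) (b := 1)
      (f := fun u : ℝ => (1 - u^2)^m)
    simp only [neg_zero, neg_one_sq] at this
    rw [← this]
    apply intervalIntegral.integral_congr
    intro x _; simp [neg_sq]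
  have hsplit : (∫ u in (-1:ℝ)..1, (1 - u^2)^m)
      = (∫ u in (-1:ℝ)..0, (1 - u^2)^m) + ∫ u in (0:ℝ)..1, (1 - u^2)^m := by
    rw [intervalIntegral.integral_add_adjacent_intervals] <;>
      exact hcont.intervalIntegrable _ _
  have hodd := integral_sin_pow_odd (n := m)
  have : (∫ u in (-1:ℝ)..1, (1 - u^2)^m) = ∫ x in (0:ℝ)..Real.pi, Real.sin x ^ (2*m+1) := by
    have := hsub
    rw [hL, hR] at this
    linarith
  rw [hodd] at this
  rw [hsym] at hsplit
  linarith [hsplit, this]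

lemma aux_hyp {m : ℕ} (i j : Fin (m+1)) (hij : i ≠ j) :
    volume {x : Fin (m+1) → ℝ | x i = x j} = 0 := by
  obtain ⟨k, hk⟩ := Fin.exists_succAbove_eq hij
  set e := MeasurableEquiv.piFinSuccAbove (fun _ : Fin (m+1) => ℝ) j with he
  have hmp : MeasurePreserving e volume volume :=
    volume_preserving_piFinSuccAbove (fun _ : Fin (m+1) => ℝ) j
  have hesymm : ∀ p : ℝ × (Fin m → ℝ), e.symm p = j.insertNth p.1 p.2 := fun p => rfl
  have hT : MeasurableSet {x : Fin (m+1) → ℝ | x i = x j} :=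
    measurableSet_eq_fun (measurable_pi_apply i) (measurable_pi_apply j)
  have hpre : e.symm ⁻¹' {x : Fin (m+1) → ℝ | x i = x j} = {p : ℝ × (Fin m → ℝ) | p.2 k = p.1} := by
    ext p
    simp only [Set.mem_preimage, Set.mem_setOf_eq, hesymm, ← hk,
      Fin.insertNth_apply_same, Fin.insertNth_apply_succAbove]
  have himg : {x : Fin (m+1) → ℝ | x i = x j} = e ⁻¹' (e.symm ⁻¹' {x : Fin (m+1) → ℝ | x i = x j}) := by
    ext x; simp
  rw [himg, hmp.measure_preimage]
  · rw [hpre]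
    have hms : MeasurableSet {p : ℝ × (Fin m → ℝ) | p.2 k = p.1} :=
      measurableSet_eq_fun (measurable_snd.eval) measurable_fst
    rw [show (volume : Measure (ℝ × (Fin m → ℝ))) = Measure.prod volume volume from rfl,
      Measure.prod_apply_symm hms]
    have : ∀ y : Fin m → ℝ, ((fun x => (x, y)) ⁻¹' {p : ℝ × (Fin m → ℝ) | p.2 k = p.1}) = {y k} := by
      intro y; ext t; simp [eq_comm]
    simp [this]
  · exact (e.symm.measurableSet_preimage.mpr hT).nullMeasurableSet

lemma aux_step {m : ℕ} (j : Fin (m+1)) :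
    (∫ x in (Set.univ.pi fun _ : Fin (m+1) => Set.Ioo (0:ℝ) 1) ∩
        {x : Fin (m+1) → ℝ | ∀ i, i ≠ j → x j < x i}, (∏ i, x i) / x j)
      = ∫ t in Set.Ioo (0:ℝ) 1, ((1 - t^2)/2)^m := by
  set S : Set (Fin (m+1) → ℝ) := Set.univ.pi fun _ => Set.Ioo (0:ℝ) 1 with hSdef
  set A : Set (Fin (m+1) → ℝ) := {x | ∀ i, i ≠ j → x j < x i} with hAdef
  set e := MeasurableEquiv.piFinSuccAbove (fun _ : Fin (m+1) => ℝ) j with he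
  have hmp : MeasurePreserving e.symm volume volume :=
    (volume_preserving_piFinSuccAbove (fun _ : Fin (m+1) => ℝ) j).symm
  have hesymm : ∀ p : ℝ × (Fin m → ℝ), e.symm p = j.insertNth p.1 p.2 := fun p => rfl
  set U : Set (ℝ × (Fin m → ℝ)) :=
    {p | (0 < p.1 ∧ p.1 < 1) ∧ ∀ i, p.1 < p.2 i ∧ p.2 i < 1} with hUdef
  have hUm : MeasurableSet U := by
    have : U = ({p : ℝ × (Fin m → ℝ) | 0 < p.1} ∩ {p | p.1 < 1}) ∩
        ⋂ i, ({p : ℝ × (Fin m → ℝ) | p.1 < p.2 i} ∩ {p | p.2 i < 1}) := by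
      ext p
      simp only [hUdef, Set.mem_setOf_eq, Set.mem_inter_iff, Set.mem_iInter, and_assoc,
        forall_and]
    rw [this]
    exact ((measurableSet_lt measurable_const measurable_fst).inter
        (measurableSet_lt measurable_fst measurable_const)).inter
      (MeasurableSet.iInter fun i =>
        (measurableSet_lt measurable_fst
            (measurable_snd.eval : Measurable fun p : ℝ × (Fin m → ℝ) => p.2 i)).inter
          (measurableSet_lt
            (measurable_snd.eval : Measurable fun p : ℝ × (Fin m → ℝ) => p.2 i)
            measurable_const))
  have hsame : ∀ p : ℝ × (Fin m → ℝ), e.symm p j = p.1 := fun p => by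
    rw [hesymm]; exact Fin.insertNth_apply_same j _ _
  have habove : ∀ (p : ℝ × (Fin m → ℝ)) (i : Fin m), e.symm p (j.succAbove i) = p.2 i :=
    fun p i => by rw [hesymm]; exact Fin.insertNth_apply_succAbove j _ _ i
  have hpre : e.symm ⁻¹' (S ∩ A) = U := by
    ext p
    simp only [Set.mem_preimage, Set.mem_inter_iff, hSdef, hAdef, hUdef,
      Set.mem_univ_pi, Set.mem_Ioo, Set.mem_setOf_eq]
    constructor
    · rintro ⟨hS, hA⟩
      refine ⟨?_, fun i => ⟨?_, ?_⟩⟩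
      · have := hS j; rwa [hsame] at this
      · have := hA (j.succAbove i) (j.succAbove_ne i)
        rwa [hsame, habove] at this
      · have := (hS (j.succAbove i)).2; rwa [habove] at this
    · rintro ⟨ht, hy⟩
      refine ⟨fun k => ?_, fun k hk => ?_⟩
      · rcases eq_or_ne k j with rfl | hkj
        · rw [hsame]; exact ht
        · obtain ⟨i, rfl⟩ := Fin.exists_succAbove_eq hkj
          rw [habove]
          exact ⟨lt_trans ht.1 (hy i).1, (hy i).2⟩
      · obtain ⟨i, rfl⟩ := Fin.exists_succAbove_eq hk
        rw [hsame, habove]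
        exact (hy i).1
  rw [← hmp.setIntegral_preimage_emb e.symm.measurableEmbedding, hpre]
  have hcongr : ∫ p in U, (∏ i, e.symm p i) / e.symm p j
      = ∫ p in U, ∏ i, p.2 i := by
    apply setIntegral_congr_fun hUm
    intro p hp
    simp only [hesymm]
    rw [Fin.prod_univ_succAbove (fun i => j.insertNth p.1 p.2 i) j]
    simp only [Fin.insertNth_apply_same, Fin.insertNth_apply_succAbove]
    exact mul_div_cancel_left₀ _ (ne_of_gt hp.1.1)
  rw [hcongr]
  have hF : Measurable fun p : ℝ × (Fin m → ℝ) => ∏ i, p.2 i :=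
    Finset.measurable_prod _ fun i _ => measurable_snd.eval
  have hUsub : U ⊆ (Set.Ioo (0:ℝ) 1) ×ˢ (Set.univ.pi fun _ : Fin m => Set.Ioo (0:ℝ) 1) := by
    rintro p ⟨⟨h0, h1⟩, h⟩
    exact ⟨⟨h0, h1⟩, fun i _ => ⟨lt_trans h0 (h i).1, (h i).2⟩⟩
  have hUfin : volume U ≠ ⊤ := by
    refine ne_top_of_le_ne_top ?_ (measure_mono hUsub)
    rw [show (volume : Measure (ℝ × (Fin m → ℝ))) = Measure.prod volume volume from rfl,
      Measure.prod_prod, Real.volume_Ioo, volume_pi, Measure.pi_pi]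
    simp
  have hIntOn : IntegrableOn (fun p : ℝ × (Fin m → ℝ) => ∏ i, p.2 i) U := by
    apply Measure.integrableOn_of_bounded hUfin hF.aestronglyMeasurable (M := 1)
    rw [ae_restrict_iff' hUm]
    refine Filter.Eventually.of_forall fun p hp => ?_
    rw [Real.norm_eq_abs,
      abs_of_nonneg (Finset.prod_nonneg fun i _ => le_of_lt (lt_trans hp.1.1 (hp.2 i).1))]
    exact Finset.prod_le_one (fun i _ => le_of_lt (lt_trans hp.1.1 (hp.2 i).1))
      (fun i _ => le_of_lt (hp.2 i).2)
  rw [← integral_indicator hUm,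
    show (volume : Measure (ℝ × (Fin m → ℝ))) = Measure.prod volume volume from rfl,
    integral_prod _ ((integrable_indicator_iff hUm).mpr hIntOn)]
  have hinner : ∀ t : ℝ, (∫ y : Fin m → ℝ, U.indicator (fun p => ∏ i, p.2 i) (t, y))
      = (Set.Ioo (0:ℝ) 1).indicator (fun t => ((1 - t^2)/2)^m) t := by
    intro t
    by_cases ht : t ∈ Set.Ioo (0:ℝ) 1
    · rw [Set.indicator_of_mem ht]
      have hpt : ∀ y : Fin m → ℝ, U.indicator (fun p => ∏ i, p.2 i) (t, y)
          = ∏ i, (Set.Ioo t 1).indicator (fun x => x) (y i) := by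
        intro y
        by_cases hy : ∀ i, y i ∈ Set.Ioo t 1
        · rw [Set.indicator_of_mem]
          · exact Finset.prod_congr rfl fun i _ => (Set.indicator_of_mem (hy i) (fun x => x)).symm
          · exact ⟨ht, fun i => ⟨(hy i).1, (hy i).2⟩⟩
        · push_neg at hy
          obtain ⟨i, hi⟩ := hy
          have hi' : y i ∉ Set.Ioo t 1 := hi
          have hnU : (t, y) ∉ U := by
            rintro ⟨-, h⟩
            exact hi' ⟨(h i).1, (h i).2⟩
          rw [Set.indicator_of_notMem hnU]
          exact (Finset.prod_eq_zero (Finset.mem_univ i)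
            (Set.indicator_of_notMem hi' _)).symm
      simp_rw [hpt]
      rw [volume_pi, MeasureTheory.integral_fintype_prod_eq_pow (ι := Fin m)
        ((Set.Ioo t 1).indicator fun x => x)]
      rw [integral_indicator measurableSet_Ioo,
        ← MeasureTheory.integral_Ioc_eq_integral_Ioo,
        ← intervalIntegral.integral_of_le ht.2.le, integral_id]
      norm_num
    · rw [Set.indicator_of_notMem ht]
      have hz : ∀ y : Fin m → ℝ, U.indicator (fun p : ℝ × (Fin m → ℝ) => ∏ i, p.2 i) (t, y) = 0 :=
        fun y => Set.indicator_of_notMem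
          (fun hU' => ht (Set.mem_Ioo.mpr ⟨hU'.1.1, hU'.1.2⟩)) _
      simp only [hz, integral_zero]
  simp_rw [hinner]
  rw [integral_indicator measurableSet_Ioo]

/-- For `n ≥ 1`, the idempotency average value over `[0,1]^n` of the product
`P(x) = ∏ᵢ xᵢ` equals `2^{n−1}/binom(2n−1, n)`, i.e.
`∫_{(0,1)^n} (∏ᵢ xᵢ)/(minᵢ xᵢ) dx = 2^{n−1}/binom(2n−1, n)`. -/
theorem idempotency_average_product (n : ℕ) (hn : 1 ≤ n) :
    (∫ x in Set.univ.pi fun _ : Fin n => Set.Ioo (0 : ℝ) 1,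
        (∏ i : Fin n, x i) / Finset.univ.inf' ⟨⟨0, by omega⟩, Finset.mem_univ _⟩ x)
      = 2 ^ (n - 1) / (Nat.choose (2 * n - 1) n : ℝ) := by
  obtain ⟨m, rfl⟩ : ∃ m, n = m + 1 := ⟨n - 1, by omega⟩
  set S : Set (Fin (m+1) → ℝ) := Set.univ.pi fun _ => Set.Ioo (0:ℝ) 1 with hSdef
  set A : Fin (m+1) → Set (Fin (m+1) → ℝ) :=
    fun j => {x | ∀ i, i ≠ j → x j < x i} with hAdef
  set g : Fin (m+1) → (Fin (m+1) → ℝ) → ℝ := fun j x => (∏ i, x i) / x j with hgdef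
  have hS : MeasurableSet S := MeasurableSet.univ_pi fun _ => measurableSet_Ioo
  have hA : ∀ j, MeasurableSet (A j) := by
    intro j
    have : A j = ⋂ i, {x : Fin (m+1) → ℝ | i ≠ j → x j < x i} := by
      ext x; simp [hAdef, Set.mem_iInter]
    rw [this]
    refine MeasurableSet.iInter fun i => ?_
    by_cases h : i = j
    · simp [h]
    · simpa [h] using measurableSet_lt (measurable_pi_apply j) (measurable_pi_apply i)
  have hg : ∀ j, Measurable (g j) := fun j =>
    (Finset.measurable_prod _ fun i _ => measurable_pi_apply i).div (measurable_pi_apply j)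
  -- a.e. injectivity
  have hae0 : ∀ᵐ x : Fin (m+1) → ℝ, ∀ i j : Fin (m+1), i ≠ j → x i ≠ x j := by
    rw [MeasureTheory.ae_all_iff]
    intro i
    rw [MeasureTheory.ae_all_iff]
    intro j
    by_cases hij : i = j
    · subst hij; filter_upwards with x h; exact absurd rfl h
    · have h0 := aux_hyp i j hij
      have : ∀ᵐ x : Fin (m+1) → ℝ, x ∉ {x : Fin (m+1) → ℝ | x i = x j} :=
        measure_eq_zero_iff_ae_notMem.mp h0
      filter_upwards [this] with x hx
      exact fun _ => hx
  -- pointwise key identity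
  have key : ∀ x : Fin (m+1) → ℝ, (∀ i j : Fin (m+1), i ≠ j → x i ≠ x j) →
      (∏ i, x i) / Finset.univ.inf' ⟨⟨0, by omega⟩, Finset.mem_univ _⟩ x
        = ∑ j, (A j).indicator (g j) x := by
    intro x hx
    obtain ⟨j, -, hj⟩ := Finset.exists_mem_eq_inf'
      (⟨⟨0, by omega⟩, Finset.mem_univ _⟩ : (Finset.univ : Finset (Fin (m+1))).Nonempty) x
    have hjA : x ∈ A j := by
      intro i hi
      exact lt_of_le_of_ne (hj ▸ Finset.inf'_le x (Finset.mem_univ i)) (hx j i (Ne.symm hi))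
    rw [Finset.sum_eq_single j]
    · rw [Set.indicator_of_mem hjA, hj]
    · intro k _ hkj
      apply Set.indicator_of_notMem
      intro hk
      have h1 := hk j hkj.symm
      have h2 : x j ≤ x k := hj ▸ Finset.inf'_le x (Finset.mem_univ k)
      exact absurd h1 (not_lt.mpr h2)
    · intro h; exact absurd (Finset.mem_univ j) h
  -- integrability
  have hSfin : volume S ≠ ⊤ := by
    rw [hSdef, volume_pi, Measure.pi_pi]
    simp
  have hInt : ∀ j, Integrable ((A j).indicator (g j)) (volume.restrict S) := by
    intro j
    apply Measure.integrableOn_of_bounded hSfin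
      (((hg j).indicator (hA j)).aestronglyMeasurable) (M := 1)
    rw [ae_restrict_iff' hS]
    refine Filter.Eventually.of_forall fun x hxS => ?_
    rw [Set.mem_univ_pi] at hxS
    by_cases hxA : x ∈ A j
    · rw [Set.indicator_of_mem hxA]
      have hpos : ∀ i, 0 < x i := fun i => (hxS i).1
      have hprod : ∏ i, x i ≤ x j := by
        calc ∏ i, x i = (∏ i ∈ Finset.univ.erase j, x i) * x j :=
              (Finset.prod_erase_mul _ _ (Finset.mem_univ j)).symm
          _ ≤ 1 * x j := by
              apply mul_le_mul_of_nonneg_right _ (le_of_lt (hpos j))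
              exact Finset.prod_le_one (fun i _ => le_of_lt (hpos i))
                (fun i _ => le_of_lt (hxS i).2)
          _ = x j := one_mul _
      rw [hgdef, Real.norm_eq_abs,
        abs_of_nonneg (div_nonneg (Finset.prod_nonneg fun i _ => le_of_lt (hpos i))
          (le_of_lt (hpos j)))]
      exact (div_le_one (hpos j)).mpr hprod
    · rw [Set.indicator_of_notMem hxA]; simp
  -- main computation
  calc (∫ x in S, (∏ i, x i) / Finset.univ.inf' ⟨⟨0, by omega⟩, Finset.mem_univ _⟩ x)
      = ∫ x in S, ∑ j, (A j).indicator (g j) x := by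
        refine integral_congr_ae (ae_restrict_of_ae ?_)
        filter_upwards [hae0] with x hx
        exact key x hx
    _ = ∑ j, ∫ x in S, (A j).indicator (g j) x := integral_finset_sum _ fun j _ => hInt j
    _ = ∑ j, ∫ x in S ∩ A j, g j x := by
        refine Finset.sum_congr rfl fun j _ => ?_
        rw [setIntegral_indicator (hA j)]
    _ = ∑ _j : Fin (m+1), ∫ t in Set.Ioo (0:ℝ) 1, ((1 - t^2)/2)^m := by
        refine Finset.sum_congr rfl fun j _ => aux_step j
    _ = ((m:ℝ)+1) * ∫ t in Set.Ioo (0:ℝ) 1, ((1 - t^2)/2)^m := by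
        rw [Finset.sum_const, Finset.card_univ, Fintype.card_fin, nsmul_eq_mul]
        push_cast; ring
    _ = 2 ^ ((m+1) - 1) / (Nat.choose (2 * (m+1) - 1) (m+1) : ℝ) := by
        have hval : (∫ t in Set.Ioo (0:ℝ) 1, ((1 - t^2)/2)^m)
            = (∏ i ∈ Finset.range m, (2*(i:ℝ)+2)/(2*(i:ℝ)+3)) / 2^m := by
          simp_rw [div_pow]
          rw [integral_div, ← MeasureTheory.integral_Ioc_eq_integral_Ioo,
            ← intervalIntegral.integral_of_le (by norm_num : (0:ℝ) ≤ 1), aux_J m]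
        rw [hval, show (m+1) - 1 = m from by omega, show 2*(m+1) - 1 = 2*m+1 from by omega]
        have hC : ((Nat.choose (2*m+1) (m+1) : ℝ)) ≠ 0 := by
          exact_mod_cast (Nat.choose_pos (by omega)).ne'
        have h2m : (2:ℝ)^m ≠ 0 := by positivity
        have hm1 : ((m:ℝ)+1) ≠ 0 := by positivity
        have h4 : (4:ℝ)^m = 2^m * 2^m := by rw [← mul_pow]; norm_num
        rw [mul_div_assoc', div_eq_div_iff h2m hC]
        linear_combination aux_choose m + h4
end
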